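/- arXiv:1211.0680 — 8 statements merged into one kernel-verified Lean document; each statement's English description precedes it below -/
import Mathlib

section
/- Let A > 0 and R > 0, and suppose Σ_{ℓ=0}^{d} Σ_{j=1}^{K} |a_{ℓ,j}| ≤ A. For an integer M ≥ 1 set δ_M = (2πR/A)·M^{−d−2}. Then for every integer k with 1 ≤ k ≤ M, |F_k(ξ, a) − F_k(ξ + δ_M, a)| ≤ R·k^{−d−2}. (Hence the Fourier coefficients of indices 1 through M of the two piecewise polynomials — one with jumps at ξ_1, …, ξ_K and one with jumps at ξ_1 + δ_M, …, ξ_K + δ_M, with the same jump magnitudes — differ by no more than the admissible smooth-part perturbation R·k^{−d−2}, although all jump locations differ by exactly δ_M = (2πR/A)M^{−d−2}; this underlies the fact that no deterministic algorithm can recover jump locations from the first M Fourier coefficients with accuracy asymptotically better than M^{−d−2}.) -/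
open Real Complex

/-- The `k`-th Fourier coefficient of the degree-`d` piecewise polynomial with jump
points `ξ_j` and jump magnitudes `a_{ℓ,j}`:
`F_k(ξ, a) = (1/2π) Σ_{j} e^{−ikξ_j} Σ_{ℓ=0}^{d} (ik)^{−ℓ−1} a_{ℓ,j}`. -/
lemma norm_exp_mul_I_sub_one_le (t : ℝ) : ‖Complex.exp ((t : ℂ) * Complex.I) - 1‖ ≤ |t| := by
  have hsq : ‖Complex.exp ((t : ℂ) * Complex.I) - 1‖ ^ 2 = 2 - 2 * Real.cos t := by
    rw [Complex.sq_norm, Complex.normSq_apply]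
    simp [Complex.exp_ofReal_mul_I_re, Complex.exp_ofReal_mul_I_im]
    nlinarith [Real.sin_sq_add_cos_sq t]
  have hc := Real.one_sub_sq_div_two_le_cos (x := t)
  have h1 : ‖Complex.exp ((t : ℂ) * Complex.I) - 1‖ ^ 2 ≤ t ^ 2 := by rw [hsq]; linarith
  nlinarith [norm_nonneg (Complex.exp ((t : ℂ) * Complex.I) - 1), abs_nonneg t, _root_.sq_abs t]

noncomputable def eckhoffFourierCoeff (d K : ℕ) (k : ℕ) (ξ : Fin K → ℝ) (a : ℕ → Fin K → ℂ) : ℂ :=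
  (1 / (2 * (π : ℂ))) * ∑ j : Fin K, Complex.exp (-Complex.I * (k : ℂ) * (ξ j : ℂ)) *
    ∑ ℓ ∈ Finset.range (d + 1), ((Complex.I * (k : ℂ)) ^ (ℓ + 1))⁻¹ * a ℓ j

/-- if `Σ_{ℓ,j}|a_{ℓ,j}| ≤ A` and `δ_M = (2πR/A)·M^{−d−2}`, then for all
`1 ≤ k ≤ M` the Fourier coefficients of the shifted and unshifted piecewise polynomials
differ by at most `R·k^{−d−2}`. -/
theorem eckhoffFourierCoeff_shift_within_noise (d K : ℕ) (hK : 1 ≤ K)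
    (ξ : Fin K → ℝ) (a : ℕ → Fin K → ℂ)
    (A R : ℝ) (hA : 0 < A) (hR : 0 < R)
    (ha : ∑ ℓ ∈ Finset.range (d + 1), ∑ j : Fin K, ‖a ℓ j‖ ≤ A)
    (M : ℕ) (hM : 1 ≤ M) :
    ∀ k : ℕ, 1 ≤ k → k ≤ M →
      ‖eckhoffFourierCoeff d K k ξ a -
          eckhoffFourierCoeff d K k
            (fun j => ξ j + (2 * π * R / A) * ((M : ℝ) ^ (d + 2))⁻¹) a‖
        ≤ R * ((k : ℝ) ^ (d + 2))⁻¹ := by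
  intro k hk hkM
  set δ : ℝ := (2 * π * R / A) * ((M : ℝ) ^ (d + 2))⁻¹ with hδ
  have hkR : (1 : ℝ) ≤ (k : ℝ) := by exact_mod_cast hk
  have hkpos : (0 : ℝ) < (k : ℝ) := by linarith
  have hMpos : (0 : ℝ) < (M : ℝ) := by exact_mod_cast hM
  have hδpos : 0 < δ := by
    have := Real.pi_pos
    apply mul_pos (by positivity) (by positivity)
  set S : Fin K → ℂ := fun j =>
    ∑ ℓ ∈ Finset.range (d + 1), ((Complex.I * (k : ℂ)) ^ (ℓ + 1))⁻¹ * a ℓ j with hS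
  set T : Fin K → ℝ := fun j => ∑ ℓ ∈ Finset.range (d + 1), ‖a ℓ j‖ with hT
  -- rewrite the difference
  have hdiff : eckhoffFourierCoeff d K k ξ a -
      eckhoffFourierCoeff d K k (fun j => ξ j + δ) a =
      (1 / (2 * (π : ℂ))) * ∑ j : Fin K,
        (Complex.exp (-Complex.I * (k : ℂ) * ((ξ j : ℝ) : ℂ)) -
          Complex.exp (-Complex.I * (k : ℂ) * ((ξ j + δ : ℝ) : ℂ))) * S j := by
    unfold eckhoffFourierCoeff
    rw [← mul_sub, ← Finset.sum_sub_distrib]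
    exact congrArg _ (Finset.sum_congr rfl fun j _ => (sub_mul _ _ _).symm)
  rw [hdiff, norm_mul]
  have hπ := Real.pi_pos
  have hn1 : ‖(1 / (2 * (π : ℂ)))‖ = 1 / (2 * π) := by
    simp [norm_div, Complex.norm_real, abs_of_pos hπ]
  -- bound for exponential difference
  have hEd : ∀ j : Fin K,
      ‖Complex.exp (-Complex.I * (k : ℂ) * ((ξ j : ℝ) : ℂ)) -
        Complex.exp (-Complex.I * (k : ℂ) * ((ξ j + δ : ℝ) : ℂ))‖ ≤ (k : ℝ) * δ := by
    intro j
    have h1 : -Complex.I * (k : ℂ) * ((ξ j : ℝ) : ℂ) = ((-((k : ℝ) * ξ j) : ℝ) : ℂ) * Complex.I := by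
      push_cast; ring
    have h2 : -Complex.I * (k : ℂ) * ((ξ j + δ : ℝ) : ℂ) =
        ((-((k : ℝ) * ξ j) : ℝ) : ℂ) * Complex.I + ((-((k : ℝ) * δ) : ℝ) : ℂ) * Complex.I := by
      push_cast; ring
    rw [h1, h2, Complex.exp_add, ← mul_one (Complex.exp (((-((k : ℝ) * ξ j) : ℝ) : ℂ) * Complex.I)),
      mul_assoc, ← mul_sub, norm_mul, Complex.norm_exp_ofReal_mul_I, one_mul, one_mul,
      norm_sub_rev]
    calc ‖Complex.exp (((-((k : ℝ) * δ) : ℝ) : ℂ) * Complex.I) - 1‖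
        ≤ |(-((k : ℝ) * δ))| := norm_exp_mul_I_sub_one_le _
      _ = (k : ℝ) * δ := by rw [abs_neg, abs_of_pos (mul_pos hkpos hδpos)]
  -- bound for the inner sum
  have hSd : ∀ j : Fin K, ‖S j‖ ≤ (k : ℝ)⁻¹ * T j := by
    intro j
    calc ‖S j‖ ≤ ∑ ℓ ∈ Finset.range (d + 1), ‖((Complex.I * (k : ℂ)) ^ (ℓ + 1))⁻¹ * a ℓ j‖ :=
          norm_sum_le _ _
      _ ≤ ∑ ℓ ∈ Finset.range (d + 1), (k : ℝ)⁻¹ * ‖a ℓ j‖ := by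
          refine Finset.sum_le_sum fun ℓ _ => ?_
          rw [norm_mul, norm_inv, norm_pow, norm_mul, Complex.norm_I, one_mul,
            Complex.norm_natCast]
          refine mul_le_mul_of_nonneg_right ?_ (norm_nonneg _)
          refine inv_anti₀ hkpos ?_
          calc (k : ℝ) = (k : ℝ) ^ 1 := (pow_one _).symm
            _ ≤ (k : ℝ) ^ (ℓ + 1) := pow_le_pow_right₀ hkR (Nat.le_add_left 1 ℓ)
      _ = (k : ℝ)⁻¹ * T j := by rw [hT, Finset.mul_sum]
  -- total
  have hbound : ‖∑ j : Fin K,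
      (Complex.exp (-Complex.I * (k : ℂ) * ((ξ j : ℝ) : ℂ)) -
        Complex.exp (-Complex.I * (k : ℂ) * ((ξ j + δ : ℝ) : ℂ))) * S j‖
      ≤ δ * ∑ j : Fin K, T j := by
    calc ‖∑ j : Fin K, _‖ ≤ ∑ j : Fin K,
        ‖(Complex.exp (-Complex.I * (k : ℂ) * ((ξ j : ℝ) : ℂ)) -
          Complex.exp (-Complex.I * (k : ℂ) * ((ξ j + δ : ℝ) : ℂ))) * S j‖ := norm_sum_le _ _
      _ ≤ ∑ j : Fin K, ((k : ℝ) * δ) * ((k : ℝ)⁻¹ * T j) := by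
          refine Finset.sum_le_sum fun j _ => ?_
          rw [norm_mul]
          exact mul_le_mul (hEd j) (hSd j) (norm_nonneg _)
            (mul_nonneg hkpos.le hδpos.le)
      _ = δ * ∑ j : Fin K, T j := by
          rw [Finset.mul_sum]
          refine Finset.sum_congr rfl fun j _ => ?_
          field_simp
  have hTA : ∑ j : Fin K, T j ≤ A := by
    have := Finset.sum_comm (s := Finset.range (d + 1)) (t := (Finset.univ : Finset (Fin K)))
      (f := fun ℓ j => ‖a ℓ j‖)
    simp only [hT]
    rw [← this]
    exact ha
  have hTnn : 0 ≤ ∑ j : Fin K, T j :=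
    Finset.sum_nonneg fun j _ => Finset.sum_nonneg fun ℓ _ => norm_nonneg _
  calc ‖(1 / (2 * (π : ℂ)))‖ * ‖∑ j : Fin K, _‖
      ≤ (1 / (2 * π)) * (δ * ∑ j : Fin K, T j) := by
        rw [hn1]; exact mul_le_mul_of_nonneg_left hbound (by positivity)
    _ ≤ (1 / (2 * π)) * (δ * A) := by
        refine mul_le_mul_of_nonneg_left (mul_le_mul_of_nonneg_left hTA hδpos.le) (by positivity)
    _ = R * ((M : ℝ) ^ (d + 2))⁻¹ := by
        rw [hδ]; field_simp
    _ ≤ R * ((k : ℝ) ^ (d + 2))⁻¹ := by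
        refine mul_le_mul_of_nonneg_left ?_ hR.le
        refine inv_anti₀ (by positivity) ?_
        exact pow_le_pow_left₀ hkpos.le (by exact_mod_cast hkM) _
end

section
/- The point u = z = ω^N is a root of the polynomial p_N^d, i.e. p_N^d(ω^N) = 0. -/
open Complex

/-- `m_k = ω^k · Σ_{ℓ=0}^{d} α_ℓ k^ℓ`. -/
noncomputable def eckhoffM (d : ℕ) (ω : ℂ) (α : ℕ → ℂ) (k : ℕ) : ℂ :=
  ω ^ k * ∑ ℓ ∈ Finset.range (d + 1), α ℓ * (k : ℂ) ^ ℓ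

/-- `p_N^d(u) = Σ_{j=0}^{d+1} (−1)^j C(d+1, j) m_{(j+1)N} u^{d+1−j}`. -/
noncomputable def eckhoffP (d N : ℕ) (ω : ℂ) (α : ℕ → ℂ) (u : ℂ) : ℂ :=
  ∑ j ∈ Finset.range (d + 2),
    (-1 : ℂ) ^ j * ((d + 1).choose j : ℂ) * eckhoffM d ω α ((j + 1) * N) * u ^ (d + 1 - j)

/-- Iterated forward differences of order `n > ℓ` kill `j ↦ (a j + b)^ℓ`. -/
lemma eckhoff_fwdDiff_pow_eq_zero (a b : ℂ) :
    ∀ ℓ n : ℕ, ℓ < n → (fwdDiff (1 : ℕ))^[n] (fun j : ℕ ↦ (a * j + b) ^ ℓ) = 0 := by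
  intro ℓ
  induction ℓ using Nat.strong_induction_on with
  | _ ℓ IH =>
    intro n hn
    obtain ⟨m, rfl⟩ : ∃ m, n = m + 1 := ⟨n - 1, by omega⟩
    rw [Function.iterate_succ_apply]
    have hΔ : fwdDiff (1 : ℕ) (fun j : ℕ ↦ (a * j + b) ^ ℓ) =
        ∑ i ∈ Finset.range ℓ,
          (a ^ (ℓ - i) * (ℓ.choose i : ℂ)) • (fun j : ℕ ↦ (a * j + b) ^ i) := by
      funext j
      simp only [fwdDiff, Finset.sum_apply, Pi.smul_apply, smul_eq_mul]
      have h1 : (a * ((j + 1 : ℕ) : ℂ) + b) = (a * j + b) + a := by push_cast; ring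
      rw [h1, add_pow, Finset.sum_range_succ]
      simp only [Nat.sub_self, pow_zero, Nat.choose_self, Nat.cast_one, mul_one]
      rw [add_sub_cancel_right]
      exact Finset.sum_congr rfl fun i _ ↦ by ring
    rw [hΔ, fwdDiff_iter_finset_sum]
    refine Finset.sum_eq_zero fun i hi ↦ ?_
    have hi' : i < ℓ := Finset.mem_range.mp hi
    rw [fwdDiff_iter_const_smul, IH i hi' m (by omega), smul_zero]

/-- the point `u = z = ω^N` is a root of `p_N^d`. -/
theorem eckhoffP_root_z (d N : ℕ) (hN : 1 ≤ N) (ω : ℂ) (α : ℕ → ℂ) :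
    eckhoffP d N ω α (ω ^ N) = 0 := by
  set g : ℕ → ℂ := fun j ↦ ∑ ℓ ∈ Finset.range (d + 1), α ℓ * ((N : ℂ) * j + N) ^ ℓ with hg
  -- Step 1: factor out ω ^ ((d+2)*N)
  have step1 : eckhoffP d N ω α (ω ^ N) =
      ω ^ ((d + 2) * N) *
        ∑ j ∈ Finset.range (d + 2), (-1 : ℂ) ^ j * ((d + 1).choose j : ℂ) * g j := by
    rw [eckhoffP, Finset.mul_sum]
    refine Finset.sum_congr rfl fun j hj ↦ ?_
    have hj' : j ≤ d + 1 := by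
      have := Finset.mem_range.mp hj; omega
    have hm : eckhoffM d ω α ((j + 1) * N) = ω ^ ((j + 1) * N) * g j := by
      rw [eckhoffM, hg]
      congr 1
      refine Finset.sum_congr rfl fun ℓ _ ↦ ?_
      congr 1
      push_cast
      ring
    rw [hm, ← pow_mul]
    have hpow : ω ^ ((j + 1) * N) * ω ^ (N * (d + 1 - j)) = ω ^ ((d + 2) * N) := by
      rw [← pow_add]
      congr 1
      obtain ⟨k, hk1, hk2⟩ : ∃ k, d + 1 - j = k ∧ d + 2 = (j + 1) + k :=
        ⟨d + 1 - j, rfl, by omega⟩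
      rw [hk1, hk2]
      ring
    calc (-1 : ℂ) ^ j * ((d + 1).choose j : ℂ) * (ω ^ ((j + 1) * N) * g j) *
          ω ^ (N * (d + 1 - j))
        = (ω ^ ((j + 1) * N) * ω ^ (N * (d + 1 - j))) *
            ((-1 : ℂ) ^ j * ((d + 1).choose j : ℂ) * g j) := by ring
      _ = ω ^ ((d + 2) * N) * ((-1 : ℂ) ^ j * ((d + 1).choose j : ℂ) * g j) := by
          rw [hpow]
  -- Step 2: the alternating sum is the (d+1)-st forward difference of g at 0, which vanishes.
  have hgsum : g = ∑ ℓ ∈ Finset.range (d + 1),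
      α ℓ • (fun j : ℕ ↦ ((N : ℂ) * j + N) ^ ℓ) := by
    funext j
    simp [hg, Finset.sum_apply]
  have hker : (fwdDiff (1 : ℕ))^[d + 1] g = 0 := by
    rw [hgsum, fwdDiff_iter_finset_sum]
    refine Finset.sum_eq_zero fun ℓ hℓ ↦ ?_
    rw [fwdDiff_iter_const_smul,
      eckhoff_fwdDiff_pow_eq_zero (N : ℂ) (N : ℂ) ℓ (d + 1)
        (by exact Finset.mem_range.mp hℓ), smul_zero]
  have h0 : (0 : ℂ) = ∑ k ∈ Finset.range (d + 2),
      (-1 : ℂ) ^ (d + 1 - k) * ((d + 1).choose k : ℂ) * g k := by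
    have hshift := fwdDiff_iter_eq_sum_shift (1 : ℕ) g (d + 1) 0
    rw [hker] at hshift
    simp only [Pi.zero_apply] at hshift
    rw [hshift]
    refine Finset.sum_congr rfl fun k _ ↦ ?_
    rw [zsmul_eq_mul]
    push_cast
    simp [smul_eq_mul]
  have step2 : ∑ j ∈ Finset.range (d + 2),
      (-1 : ℂ) ^ j * ((d + 1).choose j : ℂ) * g j = 0 := by
    have : ∑ j ∈ Finset.range (d + 2), (-1 : ℂ) ^ j * ((d + 1).choose j : ℂ) * g j =
        (-1 : ℂ) ^ (d + 1) * ∑ k ∈ Finset.range (d + 2),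
          (-1 : ℂ) ^ (d + 1 - k) * ((d + 1).choose k : ℂ) * g k := by
      rw [Finset.mul_sum]
      refine Finset.sum_congr rfl fun k hk ↦ ?_
      have hk' : k ≤ d + 1 := by have := Finset.mem_range.mp hk; omega
      have hsign : (-1 : ℂ) ^ k = (-1 : ℂ) ^ (d + 1) * (-1 : ℂ) ^ (d + 1 - k) := by
        rw [← pow_add, show (d + 1) + (d + 1 - k) = 2 * (d + 1 - k) + k by omega,
          pow_add, pow_mul]
        simp
      rw [hsign]; ring
    rw [this, ← h0, mul_zero]
  rw [step1, step2, mul_zero]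
end

section
/- For every integer d ≥ 0 and every integer i with 0 ≤ i ≤ d, there exist real numbers 1 < y_1 < y_2 < … < y_i (pairwise distinct) such that s_i^d(w) = (w − 1)^{d+1−i} · Π_{r=1}^{i} (w − y_r); that is, s_i^d has the root w = 1 with multiplicity exactly d+1−i, and its remaining i roots are real, simple, and strictly greater than 1. -/
/-- `s_i^d(w) = Σ_{j=0}^{d+1} (−1)^j C(d+1, j) (j+1)^i w^{d+1−j}` (as a real function). -/
noncomputable def eckhoffS (d i : ℕ) (w : ℝ) : ℝ :=
  ∑ j ∈ Finset.range (d + 2),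
    (-1 : ℝ) ^ j * ((d + 1).choose j : ℝ) * ((j : ℝ) + 1) ^ i * w ^ (d + 1 - j)

open Polynomial Finset

namespace EckhoffAux

noncomputable def S (n i : ℕ) : Polynomial ℝ :=
  ∑ j ∈ range (n + 1), C ((-1 : ℝ) ^ j * (n.choose j : ℝ) * ((j : ℝ) + 1) ^ i) * X ^ (n - j)

lemma S_eval (n i : ℕ) (w : ℝ) :
    (S n i).eval w
      = ∑ j ∈ range (n + 1),
          (-1 : ℝ) ^ j * (n.choose j : ℝ) * ((j : ℝ) + 1) ^ i * w ^ (n - j) := by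
  simp [S, eval_finset_sum]

lemma S_zero (n : ℕ) : S n 0 = ((X : Polynomial ℝ) - 1) ^ n := by
  rw [sub_pow, ← Finset.sum_range_reflect]
  refine Finset.sum_congr rfl fun j hj => ?_
  rw [Finset.mem_range] at hj
  have hj' : j ≤ n := by omega
  rw [show n + 1 - 1 - j = n - j by omega]
  rw [show n - (n - j) = j by omega, Nat.choose_symm hj']
  rw [show n - j + n = j + 2 * (n - j) by omega]
  rw [pow_add, pow_mul, neg_one_sq, one_pow, mul_one]
  simp only [pow_zero, mul_one, map_mul, map_pow, map_neg, map_one, map_natCast]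
  ring

lemma S_succ (n i : ℕ) :
    S n (i + 1) = C ((n : ℝ) + 1) * S n i - X * derivative (S n i) := by
  simp only [S]
  rw [derivative_sum, Finset.mul_sum, Finset.mul_sum, ← Finset.sum_sub_distrib]
  refine Finset.sum_congr rfl fun j hj => ?_
  rw [Finset.mem_range] at hj
  have hj' : j ≤ n := by omega
  rw [derivative_C_mul_X_pow]
  rcases Nat.eq_or_lt_of_le hj' with h | h
  · subst h
    simp only [Nat.sub_self, pow_zero, mul_one, Nat.cast_zero, mul_zero, map_zero, zero_mul,
      mul_zero, sub_zero]
    rw [← C_mul]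
    congr 1
    rw [pow_succ]
    ring
  · obtain ⟨k, hk⟩ : ∃ k, n - j = k + 1 := ⟨n - j - 1, by omega⟩
    have hn : (n : ℝ) = (j : ℝ) + (k : ℝ) + 1 := by
      have hnn : n = j + k + 1 := by omega
      rw [hnn]; push_cast; ring
    rw [hk, Nat.add_sub_cancel]
    rw [show (-1:ℝ)^j * (n.choose j : ℝ) * ((j:ℝ)+1)^(i+1)
        = ((n:ℝ)+1) * ((-1:ℝ)^j * (n.choose j : ℝ) * ((j:ℝ)+1)^i)
          - ((-1:ℝ)^j * (n.choose j : ℝ) * ((j:ℝ)+1)^i * ((k+1 : ℕ) : ℝ)) from by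
      push_cast
      linear_combination (-((-1:ℝ)^j * (n.choose j : ℝ) * ((j:ℝ)+1)^i)) * hn]
    rw [map_sub, map_mul]
    ring

lemma S_coeff_top (n i : ℕ) : (S n i).coeff n = 1 := by
  rw [S]
  rw [finset_sum_coeff]
  have h0 : ∀ j ∈ range (n+1), j ≠ 0 →
      (C ((-1:ℝ)^j * (n.choose j : ℝ) * ((j:ℝ)+1)^i) * X ^ (n - j)).coeff n = 0 := by
    intro j hj hj0
    rw [Finset.mem_range] at hj
    rw [coeff_C_mul, coeff_X_pow, if_neg (by omega), mul_zero]
  rw [Finset.sum_eq_single_of_mem 0 (Finset.mem_range.mpr (Nat.succ_pos n)) h0]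
  simp

lemma S_natDegree_le (n i : ℕ) : (S n i).natDegree ≤ n := by
  apply natDegree_sum_le_of_forall_le
  intro j hj
  apply le_trans (natDegree_C_mul_le _ _)
  rw [natDegree_X_pow]
  exact Nat.sub_le n j

lemma S_monic (n i : ℕ) : (S n i).Monic :=
  monic_of_natDegree_le_of_coeff_eq_one n (S_natDegree_le n i) (S_coeff_top n i)

lemma S_natDegree (n i : ℕ) : (S n i).natDegree = n :=
  le_antisymm (S_natDegree_le n i)
    (le_natDegree_of_ne_zero (by rw [S_coeff_top]; exact one_ne_zero))

lemma exists_root_between (p : Polynomial ℝ) {a b : ℝ} (hab : a < b)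
    (h : p.eval a * p.eval b < 0) : ∃ z ∈ Set.Ioo a b, p.eval z = 0 := by
  have hc : ContinuousOn (fun x => p.eval x) (Set.Icc a b) := p.continuous.continuousOn
  rcases mul_neg_iff.mp h with ⟨ha, hb⟩ | ⟨ha, hb⟩
  · obtain ⟨z, hz, hz0⟩ := intermediate_value_Ioo' hab.le hc ⟨hb, ha⟩
    exact ⟨z, hz, hz0⟩
  · obtain ⟨z, hz, hz0⟩ := intermediate_value_Ioo hab.le hc ⟨ha, hb⟩
    exact ⟨z, hz, hz0⟩

lemma exists_alternating_roots (p : Polynomial ℝ) (N : ℕ) (t : Fin (N + 1) → ℝ)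
    (ht : StrictMono t)
    (hs : ∀ k : Fin (N + 1), 0 < (-1 : ℝ) ^ (N - (k : ℕ)) * p.eval (t k)) :
    ∃ z : Fin N → ℝ, StrictMono z ∧ (∀ k, t 0 < z k) ∧ ∀ k, p.eval (z k) = 0 := by
  have key : ∀ k : Fin N, ∃ z ∈ Set.Ioo (t k.castSucc) (t k.succ), p.eval z = 0 := by
    intro k
    apply exists_root_between p (ht (Fin.castSucc_lt_succ (i := k)))
    have h1 := hs k.castSucc
    have h2 := hs k.succ
    rw [Fin.coe_castSucc] at h1
    rw [Fin.val_succ] at h2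
    have hk : (k : ℕ) < N := k.isLt
    set e := N - ((k : ℕ) + 1) with he
    rw [show N - (k : ℕ) = e + 1 by omega, pow_succ] at h1
    have hsq : ((-1 : ℝ) ^ e) * ((-1 : ℝ) ^ e) = 1 := by
      rw [← pow_add]; exact Even.neg_one_pow ⟨e, rfl⟩
    have hkey : ((-1 : ℝ) ^ e * (-1)) * p.eval (t k.castSucc) * ((-1 : ℝ) ^ e * p.eval (t k.succ))
        = -(p.eval (t k.castSucc) * p.eval (t k.succ)) := by
      linear_combination (-(p.eval (t k.castSucc) * p.eval (t k.succ))) * hsq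
    nlinarith [mul_pos h1 h2]
  choose z hz hz0 using key
  refine ⟨z, ?_, ?_, hz0⟩
  · intro a c hac
    have h1 : z a < t a.succ := (hz a).2
    have h2 : t c.castSucc < z c := (hz c).1
    have h3 : t a.succ ≤ t c.castSucc := by
      apply ht.monotone
      rw [Fin.le_def]
      simp only [Fin.val_succ, Fin.coe_castSucc]
      exact hac
    linarith
  · intro k
    have h2 : t k.castSucc < z k := (hz k).1
    have h3 : t 0 ≤ t k.castSucc := ht.monotone (Fin.zero_le _)
    linarith

lemma sign_prod_erase {i : ℕ} {y : Fin i → ℝ} (hy : StrictMono y) (r : Fin i) :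
    0 < (-1 : ℝ) ^ (i - 1 - (r : ℕ)) * ∏ s ∈ Finset.univ.erase r, (y r - y s) := by
  classical
  have hsplit : Finset.univ.erase r = Finset.Iio r ∪ Finset.Ioi r := by
    ext s
    simp only [Finset.mem_erase, Finset.mem_univ, and_true, Finset.mem_union, Finset.mem_Iio,
      Finset.mem_Ioi]
    exact ne_iff_lt_or_gt
  have hdisj : Disjoint (Finset.Iio r) (Finset.Ioi r) := by
    rw [Finset.disjoint_left]
    intro s hs hs'
    rw [Finset.mem_Iio] at hs
    rw [Finset.mem_Ioi] at hs'
    exact lt_asymm hs hs'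
  rw [hsplit, Finset.prod_union hdisj]
  have h1 : 0 < ∏ s ∈ Finset.Iio r, (y r - y s) :=
    Finset.prod_pos fun s hs => sub_pos.2 (hy (Finset.mem_Iio.mp hs))
  have hcard : (Finset.Ioi r).card = i - 1 - (r : ℕ) := Fin.card_Ioi r
  have h2 : ∏ s ∈ Finset.Ioi r, (y r - y s)
      = (-1 : ℝ) ^ (i - 1 - (r : ℕ)) * ∏ s ∈ Finset.Ioi r, (y s - y r) := by
    rw [← hcard]
    calc ∏ s ∈ Finset.Ioi r, (y r - y s) = ∏ s ∈ Finset.Ioi r, (-1) * (y s - y r) := by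
          refine Finset.prod_congr rfl fun s _ => by ring
      _ = (-1 : ℝ) ^ (Finset.Ioi r).card * ∏ s ∈ Finset.Ioi r, (y s - y r) := by
          rw [Finset.prod_mul_distrib, Finset.prod_const]
  have h3 : 0 < ∏ s ∈ Finset.Ioi r, (y s - y r) :=
    Finset.prod_pos fun s hs => sub_pos.2 (hy (Finset.mem_Ioi.mp hs))
  rw [h2]
  have hsq : ((-1 : ℝ) ^ (i - 1 - (r : ℕ))) * ((-1 : ℝ) ^ (i - 1 - (r : ℕ))) = 1 := by
    rw [← pow_add]; exact Even.neg_one_pow ⟨i - 1 - (r : ℕ), rfl⟩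
  have hkey : (-1 : ℝ) ^ (i - 1 - (r : ℕ)) *
      ((∏ s ∈ Finset.Iio r, (y r - y s)) *
        ((-1 : ℝ) ^ (i - 1 - (r : ℕ)) * ∏ s ∈ Finset.Ioi r, (y s - y r)))
      = (∏ s ∈ Finset.Iio r, (y r - y s)) * ∏ s ∈ Finset.Ioi r, (y s - y r) := by
    linear_combination ((∏ s ∈ Finset.Iio r, (y r - y s)) * ∏ s ∈ Finset.Ioi r, (y s - y r)) * hsq
  rw [hkey]
  exact mul_pos h1 h3

lemma derivative_finset_prod {ι : Type*} [DecidableEq ι] (s : Finset ι) (f : ι → Polynomial ℝ) :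
    derivative (∏ j ∈ s, f j) = ∑ j ∈ s, (∏ k ∈ s.erase j, f k) * derivative (f j) := by
  induction s using Finset.induction_on with
  | empty => simp
  | @insert a s ha ih =>
    rw [Finset.prod_insert ha, derivative_mul, ih, Finset.sum_insert ha, Finset.erase_insert ha,
      Finset.mul_sum]
    congr 1
    · ring
    · refine Finset.sum_congr rfl fun j hj => ?_
      have haj : j ≠ a := by rintro rfl; exact ha hj
      rw [Finset.erase_insert_of_ne (Ne.symm haj), Finset.prod_insert (fun h => ha (Finset.mem_of_mem_erase h))]
      ring

lemma eval_derivative_prod {i : ℕ} (y : Fin i → ℝ) (hy : Function.Injective y) (r : Fin i) :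
    (derivative (∏ s : Fin i, (X - C (y s)))).eval (y r)
      = ∏ s ∈ Finset.univ.erase r, (y r - y s) := by
  classical
  rw [derivative_finset_prod, eval_finset_sum]
  rw [Finset.sum_eq_single r]
  · simp [eval_prod]
  · intro j _ hjr
    have hzero : (∏ k ∈ Finset.univ.erase j, (X - C (y k))).eval (y r) = 0 := by
      rw [eval_prod]
      apply Finset.prod_eq_zero (Finset.mem_erase.mpr ⟨Ne.symm hjr, Finset.mem_univ r⟩)
      simp
    simp [hzero]
  · simp

lemma main (n : ℕ) : ∀ i, i < n → ∃ y : Fin i → ℝ, StrictMono y ∧ (∀ r, 1 < y r) ∧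
    S n i = ((X : Polynomial ℝ) - 1) ^ (n - i) * ∏ r : Fin i, (X - C (y r)) := by
  intro i
  induction i with
  | zero =>
    intro _
    refine ⟨Fin.elim0, fun a => a.elim0, fun a => a.elim0, ?_⟩
    simp [S_zero]
  | succ i ih =>
    intro hin
    obtain ⟨y, hy, hy1, hS⟩ := ih (by omega)
    set m := n - i with hm
    have hm2 : 2 ≤ m := by omega
    set Q : Polynomial ℝ := ∏ r : Fin i, (X - C (y r)) with hQdef
    have hQmonic : Q.Monic := monic_prod_of_monic _ _ fun r _ => monic_X_sub_C _
    set R : Polynomial ℝ := C ((n : ℝ) + 1) * (X - 1) * Q - C ((m : ℝ)) * X * Q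
        - X * (X - 1) * derivative Q with hRdef
    have hXm : ((X : Polynomial ℝ) - 1).Monic := by
      have := monic_X_sub_C (1 : ℝ)
      rwa [map_one] at this
    have hfact : S n (i + 1) = ((X : Polynomial ℝ) - 1) ^ (m - 1) * R := by
      obtain ⟨k, hk⟩ : ∃ k, m = k + 2 := ⟨m - 2, by omega⟩
      rw [S_succ, hS, hRdef, hk]
      rw [show k + 2 - 1 = k + 1 by omega]
      rw [show ((X : Polynomial ℝ) - 1) ^ (k + 2) = ((X:Polynomial ℝ) - 1) ^ (k+1+1) by norm_num]
      rw [derivative_mul, derivative_pow_succ]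
      rw [show derivative ((X : Polynomial ℝ) - 1) = 1 by
        rw [derivative_sub, derivative_X, derivative_one, sub_zero]]
      push_cast
      ring
    have hSm := S_monic n (i + 1)
    have hSd := S_natDegree n (i + 1)
    rw [hfact] at hSm hSd
    have hpowm : (((X : Polynomial ℝ) - 1) ^ (m - 1)).Monic := hXm.pow _
    have hRmonic : R.Monic := hpowm.of_mul_monic_left hSm
    have hRdeg : R.natDegree = i + 1 := by
      have hd1 : (((X : Polynomial ℝ) - 1) ^ (m - 1)).natDegree = m - 1 := by
        rw [natDegree_pow]
        have hx1 : ((X : Polynomial ℝ) - 1).natDegree = 1 := by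
          have := natDegree_X_sub_C (1 : ℝ)
          rwa [map_one] at this
        rw [hx1, mul_one]
      have hSd' : m - 1 + R.natDegree = n := by
        rw [← hd1, ← Monic.natDegree_mul hpowm hRmonic]
        exact hSd
      omega
    have hReval : ∀ x : ℝ, R.eval x = ((n : ℝ) + 1) * (x - 1) * Q.eval x
        - (m : ℝ) * x * Q.eval x - x * (x - 1) * (derivative Q).eval x := by
      intro x; simp [hRdef]
    have hQeval : ∀ x : ℝ, Q.eval x = ∏ r : Fin i, (x - y r) := by
      intro x; simp [hQdef, eval_prod]
    -- find b beyond all roots with R.eval b > 0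
    have hdegpos : 0 < R.degree := by
      rw [degree_eq_natDegree hRmonic.ne_zero, hRdeg]
      exact_mod_cast Nat.succ_pos i
    have htend := tendsto_atTop_of_leadingCoeff_nonneg R hdegpos (by rw [hRmonic]; norm_num)
    obtain ⟨b, hb0, hb1, hbY⟩ : ∃ b : ℝ, 0 < R.eval b ∧ 1 < b ∧ ∀ r : Fin i, y r < b := by
      have h1 : ∀ᶠ x : ℝ in Filter.atTop, 0 < R.eval x := htend.eventually_gt_atTop 0
      have h2 : ∀ᶠ x : ℝ in Filter.atTop, 1 < x := Filter.eventually_gt_atTop 1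
      have h3 : ∀ᶠ x : ℝ in Filter.atTop, ∀ r : Fin i, y r < x :=
        Filter.eventually_all.mpr fun r => Filter.eventually_gt_atTop _
      obtain ⟨b, hb⟩ := ((h1.and (h2.and h3)).exists)
      exact ⟨b, hb.1, hb.2.1, hb.2.2⟩
    -- the chain of sign points
    set t : Fin (i + 2) → ℝ := fun k =>
      if h0 : (k : ℕ) = 0 then 1 else if h : (k : ℕ) < i + 1 then y ⟨(k : ℕ) - 1, by omega⟩ else b
      with htdef
    have htmono : StrictMono t := by
      intro a c hac
      have hac' : (a : ℕ) < (c : ℕ) := hac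
      simp only [htdef]
      by_cases ha0 : (a : ℕ) = 0
      · rw [dif_pos ha0, dif_neg (by omega : ¬((c:ℕ) = 0))]
        by_cases hc1 : (c : ℕ) < i + 1
        · rw [dif_pos hc1]; exact hy1 _
        · rw [dif_neg hc1]; exact hb1
      · rw [dif_neg ha0, dif_neg (by omega : ¬((c:ℕ) = 0))]
        by_cases ha1 : (a : ℕ) < i + 1
        · rw [dif_pos ha1]
          by_cases hc1 : (c : ℕ) < i + 1
          · rw [dif_pos hc1]
            apply hy
            simp only [Fin.mk_lt_mk]
            omega
          · rw [dif_neg hc1]; exact hbY _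
        · exfalso
          have : (c : ℕ) < i + 2 := c.isLt
          omega
    have hsign : ∀ k : Fin (i + 2), 0 < (-1 : ℝ) ^ (i + 1 - (k : ℕ)) * R.eval (t k) := by
      intro k
      by_cases hk0 : (k : ℕ) = 0
      · have htk : t k = 1 := by simp only [htdef]; rw [dif_pos hk0]
        rw [htk, hk0, Nat.sub_zero]
        have hQ1 : Q.eval 1 = ∏ r : Fin i, ((1 : ℝ) - y r) := hQeval 1
        have hRe : R.eval 1 = -((m : ℝ) * Q.eval 1) := by
          rw [hReval]; ring
        have hP : ∏ r : Fin i, ((1 : ℝ) - y r)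
            = (-1 : ℝ) ^ i * ∏ r : Fin i, (y r - 1) := by
          calc ∏ r : Fin i, ((1 : ℝ) - y r) = ∏ r : Fin i, (-1) * (y r - 1) := by
                refine Finset.prod_congr rfl fun s _ => by ring
            _ = (-1 : ℝ) ^ i * ∏ r : Fin i, (y r - 1) := by
                rw [Finset.prod_mul_distrib, Finset.prod_const, Finset.card_univ,
                  Fintype.card_fin]
        have hPos : 0 < ∏ r : Fin i, (y r - 1) :=
          Finset.prod_pos fun r _ => sub_pos.2 (hy1 r)
        rw [hRe, hQ1, hP]
        have hodd : ((-1 : ℝ)) ^ (i + 1) * (-1 : ℝ) ^ i = -1 := by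
          rw [← pow_add]; exact Odd.neg_one_pow ⟨i, by ring⟩
        have hmpos : (0 : ℝ) < (m : ℝ) := by
          have : 0 < m := by omega
          exact_mod_cast this
        have hkey : (-1 : ℝ) ^ (i + 1) * -((m : ℝ) * ((-1 : ℝ) ^ i * ∏ r : Fin i, (y r - 1)))
            = (m : ℝ) * ∏ r : Fin i, (y r - 1) := by
          linear_combination (-(m : ℝ) * ∏ r : Fin i, (y r - 1)) * hodd
        rw [hkey]
        exact mul_pos hmpos hPos
      · by_cases hk1 : (k : ℕ) < i + 1
        · -- middle case : t k = y r with r = k - 1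
          have hipos : 1 ≤ i := by omega
          set r : Fin i := ⟨(k : ℕ) - 1, by omega⟩ with hrdef
          have htk : t k = y r := by simp only [htdef]; rw [dif_neg hk0, dif_pos hk1]
          rw [htk]
          have hQ0 : Q.eval (y r) = 0 := by
            rw [hQeval]
            exact Finset.prod_eq_zero (Finset.mem_univ r) (by ring)
          have hdq : (derivative Q).eval (y r) = ∏ s ∈ Finset.univ.erase r, (y r - y s) :=
            eval_derivative_prod y hy.injective r
          have hRe : R.eval (y r) = -(y r * (y r - 1) * ∏ s ∈ Finset.univ.erase r, (y r - y s)) := by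
            rw [hReval, hQ0, hdq]; ring
          have hsg := sign_prod_erase hy r
          have hc : 0 < y r * (y r - 1) :=
            mul_pos (lt_trans one_pos (hy1 r)) (sub_pos.2 (hy1 r))
          rw [hRe]
          have hrval : (r : ℕ) = (k : ℕ) - 1 := rfl
          rw [show i + 1 - (k : ℕ) = (i - 1 - (r : ℕ)) + 1 by omega, pow_succ]
          have hkey : ((-1 : ℝ) ^ (i - 1 - (r : ℕ)) * (-1))
              * -(y r * (y r - 1) * ∏ s ∈ Finset.univ.erase r, (y r - y s))
              = (y r * (y r - 1)) *
                ((-1 : ℝ) ^ (i - 1 - (r : ℕ)) * ∏ s ∈ Finset.univ.erase r, (y r - y s)) := by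
            ring
          rw [hkey]
          exact mul_pos hc hsg
        · -- last case : t k = b
          have hklast : (k : ℕ) = i + 1 := by have := k.isLt; omega
          have htk : t k = b := by simp only [htdef]; rw [dif_neg hk0, dif_neg hk1]
          rw [htk, hklast, Nat.sub_self, pow_zero, one_mul]
          exact hb0
    obtain ⟨z, hz, hzgt, hz0⟩ := exists_alternating_roots R (i + 1) t htmono hsign
    have ht0 : t 0 = 1 := by simp [htdef]
    have hz1 : ∀ k, 1 < z k := by intro k; rw [← ht0]; exact hzgt k
    -- identify R with the product over its roots
    have hprod : R = ∏ k : Fin (i + 1), (X - C (z k)) := by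
      set P : Polynomial ℝ := ∏ k : Fin (i + 1), (X - C (z k)) with hPdef
      have hPmonic : P.Monic := monic_prod_of_monic _ _ fun r _ => monic_X_sub_C _
      have hPdeg : P.natDegree = i + 1 := by
        rw [hPdef, natDegree_prod_of_monic _ _ fun r _ => monic_X_sub_C _]
        simp [natDegree_X_sub_C]
      have hdiff : R - P = 0 := by
        apply eq_zero_of_natDegree_lt_card_of_eval_eq_zero (R - P) hz.injective
        · intro k
          have hPz : P.eval (z k) = 0 := by
            rw [hPdef, eval_prod]
            exact Finset.prod_eq_zero (Finset.mem_univ k) (by simp)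
          rw [eval_sub, hz0 k, hPz, sub_zero]
        · rw [Fintype.card_fin]
          have hle : (R - P).natDegree ≤ i := by
            rw [natDegree_le_iff_coeff_eq_zero]
            intro N hN
            rw [coeff_sub]
            by_cases hN1 : N = i + 1
            · subst hN1
              have h1 : R.coeff (i + 1) = 1 := by
                have := hRmonic.coeff_natDegree
                rwa [hRdeg] at this
              have h2 : P.coeff (i + 1) = 1 := by
                have := hPmonic.coeff_natDegree
                rwa [hPdeg] at this
              rw [h1, h2, sub_self]
            · have hlt : i + 1 < N := by omega
              rw [coeff_eq_zero_of_natDegree_lt (by rw [hRdeg]; exact hlt),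
                coeff_eq_zero_of_natDegree_lt (by rw [hPdeg]; exact hlt), sub_self]
          omega
      exact sub_eq_zero.mp hdiff
    refine ⟨z, hz, hz1, ?_⟩
    rw [hfact, hprod, show n - (i + 1) = m - 1 by omega]

end EckhoffAux

/-- for `0 ≤ i ≤ d`, `s_i^d(w) = (w−1)^{d+1−i} Π_{r=1}^{i} (w − y_r)` with
`1 < y_1 < … < y_i` real, simple roots. -/
theorem eckhoffS_root_structure (d i : ℕ) (hi : i ≤ d) :
    ∃ y : Fin i → ℝ, StrictMono y ∧ (∀ r, 1 < y r) ∧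
      ∀ w : ℝ, eckhoffS d i w = (w - 1) ^ (d + 1 - i) * ∏ r : Fin i, (w - y r) := by
  obtain ⟨y, hy, hy1, hS⟩ := EckhoffAux.main (d + 1) i (by omega)
  refine ⟨y, hy, hy1, fun w => ?_⟩
  have h1 : eckhoffS d i w = (EckhoffAux.S (d + 1) i).eval w := by
    rw [EckhoffAux.S_eval]
    rfl
  have h2 := congrArg (Polynomial.eval w) hS
  rw [h1, h2]
  simp [Polynomial.eval_prod]
end

section
/- For every integer d ≥ 0, the polynomial s_d^d is square-free (it has no repeated complex roots), and every complex root of s_d^d is real and lies in the interval [1, ∞). -/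
/-- The polynomial `s_d^d(w) = Σ_{j=0}^{d+1} (−1)^j C(d+1, j) (j+1)^d w^{d+1−j}` over `ℂ`. -/
noncomputable def eckhoffSPoly (d : ℕ) : Polynomial ℂ :=
  ∑ j ∈ Finset.range (d + 2),
    Polynomial.C ((-1 : ℂ) ^ j * ((d + 1).choose j : ℂ) * ((j : ℂ) + 1) ^ d) *
      Polynomial.X ^ (d + 1 - j)

open Polynomial Finset


noncomputable def U (d i : ℕ) : Polynomial ℝ :=
  ∑ j ∈ Finset.range (d + 2),
    C ((-1 : ℝ) ^ j * ((d + 1).choose j : ℝ) * ((j : ℝ) + 1) ^ i) * X ^ (j + 1)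

lemma U_zero (d : ℕ) : U d 0 = C ((-1 : ℝ) ^ (d + 1)) * (X * (X - 1) ^ (d + 1)) := by
  have h1 : ((X : ℝ[X]) - 1) = X + C (-1) := by rw [C_neg, C_1, ← sub_eq_add_neg]
  rw [U, h1, add_pow]
  rw [Finset.mul_sum, Finset.mul_sum]
  refine Finset.sum_congr rfl fun j hj => ?_
  have hj' : j ≤ d + 1 := by simpa using Nat.lt_succ_iff.mp (Finset.mem_range.mp hj)
  have hC : (((d + 1).choose j : ℕ) : ℝ[X]) = C (((d + 1).choose j : ℝ)) := by
    simp [C_eq_natCast]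
  rw [hC, ← map_pow]
  have hsign : ((-1 : ℝ)) ^ j = (-1 : ℝ) ^ (d + 1) * (-1 : ℝ) ^ (d + 1 - j) := by
    rw [← pow_add, neg_one_pow_eq_pow_mod_two, neg_one_pow_eq_pow_mod_two (n := d + 1 + (d + 1 - j))]
    congr 1
    omega
  simp only [pow_zero, mul_one, hsign]
  simp only [C_mul, C_pow]
  ring

lemma U_succ (d i : ℕ) : U d (i + 1) = X * derivative (U d i) := by
  rw [U, U, derivative_sum, Finset.mul_sum]
  refine Finset.sum_congr rfl fun j hj => ?_
  rw [derivative_C_mul, derivative_X_pow]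
  push_cast
  simp only [Nat.add_sub_cancel, C_mul, C_pow, C_add, C_1]
  ring

lemma U_coeff_top (d i : ℕ) :
    (U d i).coeff (d + 2) = (-1 : ℝ) ^ (d + 1) * ((d : ℝ) + 2) ^ i := by
  rw [U, finset_sum_coeff]
  rw [Finset.sum_eq_single (d + 1)]
  · rw [coeff_C_mul, coeff_X_pow, if_pos rfl, Nat.choose_self]
    push_cast
    ring
  · intro j hj hne
    rw [coeff_C_mul, coeff_X_pow, if_neg (by omega), mul_zero]
  · intro h
    exact absurd (Finset.mem_range.mpr (by omega)) h

lemma U_factor (d : ℕ) : ∀ i, i ≤ d → ∃ b : ℕ → ℝ,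
    (∀ k, k < i → 0 < b k ∧ b k < 1) ∧
    (∀ k l, k < l → l < i → b k < b l) ∧
    U d i = C ((-1 : ℝ) ^ (d + 1) * ((d : ℝ) + 2) ^ i) *
      (X * ((X - C 1) ^ (d + 1 - i) * ∏ k ∈ Finset.range i, (X - C (b k)))) := by
  intro i
  induction i with
  | zero =>
    intro _
    refine ⟨fun _ => 0, by omega, by omega, ?_⟩
    simp only [Finset.range_zero, Finset.prod_empty, mul_one, pow_zero, C_1]
    rw [U_zero]
    norm_num
  | succ i ih =>
    intro hi1
    obtain ⟨b, hb01, hbmono, hU⟩ := ih (by omega)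
    set ε : ℝ := (-1 : ℝ) ^ (d + 1) with hε
    have hcne : ε * ((d : ℝ) + 2) ^ i ≠ 0 :=
      mul_ne_zero (pow_ne_zero _ (by norm_num)) (pow_ne_zero _ (by positivity))
    -- roots of U d i
    have e0 : (U d i).IsRoot 0 := by simp [IsRoot, hU]
    have e1 : (U d i).IsRoot 1 := by
      simp only [IsRoot, hU, eval_mul, eval_pow, eval_sub, eval_X, eval_C, eval_one, sub_self]
      rw [zero_pow (by omega)]
      ring
    have eb : ∀ k, k < i → (U d i).IsRoot (b k) := by
      intro k hk
      simp only [IsRoot, hU, eval_mul, eval_pow, eval_prod, eval_sub, eval_X, eval_C]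
      rw [Finset.prod_eq_zero (Finset.mem_range.mpr hk) (by ring)]
      ring
    -- gaps
    set lo : ℕ → ℝ := fun k => if k = 0 then 0 else b (k - 1) with hlo
    set hi : ℕ → ℝ := fun k => if k = i then 1 else b k with hhi
    have hlo0 : ∀ k, k ≤ i → 0 ≤ lo k := by
      intro k hk
      simp only [hlo]
      split
      · exact le_refl 0
      · exact le_of_lt (hb01 _ (by omega)).1
    have hhi1 : ∀ k, k ≤ i → hi k ≤ 1 := by
      intro k hk
      simp only [hhi]
      split
      · exact le_refl 1
      · exact le_of_lt (hb01 _ (by omega)).2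
    have hlohi : ∀ k, k ≤ i → lo k < hi k := by
      intro k hk
      simp only [hlo, hhi]
      split <;> split
      · norm_num
      · exact (hb01 _ (by omega)).1
      · exact (hb01 _ (by omega)).2
      · exact hbmono _ _ (by omega) (by omega)
    have hrlo : ∀ k, k ≤ i → (U d i).IsRoot (lo k) := by
      intro k hk
      simp only [hlo]
      split
      · exact e0
      · exact eb _ (by omega)
    have hrhi : ∀ k, k ≤ i → (U d i).IsRoot (hi k) := by
      intro k hk
      simp only [hhi]
      split
      · exact e1
      · exact eb _ (by omega)
    -- Rolle
    have rolle : ∀ k, k ≤ i →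
        ∃ s, s ∈ Set.Ioo (lo k) (hi k) ∧ (derivative (U d i)).IsRoot s := by
      intro k hk
      obtain ⟨c, hc, hc0⟩ := exists_deriv_eq_zero (f := fun x => (U d i).eval x)
        (hlohi k hk) (U d i).continuousOn
        (by show eval (lo k) (U d i) = eval (hi k) (U d i)
            rw [show eval (lo k) (U d i) = 0 from hrlo k hk,
              show eval (hi k) (U d i) = 0 from hrhi k hk])
      refine ⟨c, hc, ?_⟩
      rwa [Polynomial.deriv] at hc0
    have hex : ∀ k, ∃ s, k ≤ i →
        s ∈ Set.Ioo (lo k) (hi k) ∧ (derivative (U d i)).IsRoot s := by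
      intro k
      by_cases hk : k ≤ i
      · exact (rolle k hk).imp fun s h => fun _ => h
      · exact ⟨0, fun h => absurd h hk⟩
    choose s hs using hex
    have hs01 : ∀ k, k ≤ i → 0 < s k ∧ s k < 1 := by
      intro k hk
      constructor
      · exact lt_of_le_of_lt (hlo0 k hk) ((hs k hk).1.1
        )
      · exact lt_of_lt_of_le (hs k hk).1.2 (hhi1 k hk)
    have hsmono : ∀ k l, k < l → l ≤ i → s k < s l := by
      intro k l hkl hl
      have h1 : s k < hi k := (hs k (by omega)).1.2
      have h2 : lo l < s l := (hs l hl).1.1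
      have h3 : hi k ≤ lo l := by
        simp only [hhi, hlo, if_neg (by omega : ¬ k = i), if_neg (by omega : ¬ l = 0)]
        rcases Nat.lt_or_ge k (l - 1) with h | h
        · exact le_of_lt (hbmono k (l - 1) h (by omega))
        · have : k = l - 1 := by omega
          rw [this]
      linarith
    -- degrees
    have hQm : (X * ((X - C (1:ℝ)) ^ (d + 1 - i) *
        ∏ k ∈ Finset.range i, (X - C (b k)))).Monic :=
      monic_X.mul (((monic_X_sub_C 1).pow _).mul
        (monic_prod_of_monic _ _ fun k _ => monic_X_sub_C _))
    have hprodideg : (∏ k ∈ Finset.range i, (X - C (b k))).natDegree = i := by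
      rw [natDegree_prod _ _ fun k _ => X_sub_C_ne_zero _]
      simp [natDegree_X_sub_C]
    have hQdeg : (X * ((X - C (1:ℝ)) ^ (d + 1 - i) *
        ∏ k ∈ Finset.range i, (X - C (b k)))).natDegree = d + 2 := by
      rw [monic_X.natDegree_mul (((monic_X_sub_C 1).pow _).mul
          (monic_prod_of_monic _ _ fun k _ => monic_X_sub_C _)),
        ((monic_X_sub_C (1:ℝ)).pow _).natDegree_mul
          (monic_prod_of_monic _ _ fun k _ => monic_X_sub_C _),
        natDegree_X, natDegree_pow, natDegree_X_sub_C, hprodideg]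
      omega
    have hdegU : (U d i).natDegree = d + 2 := by
      rw [hU, natDegree_C_mul hcne, hQdeg]
    have hDune : derivative (U d i) ≠ 0 := by
      intro h0
      have := natDegree_eq_zero_of_derivative_eq_zero h0
      omega
    -- divisibility
    have hdvd1 : (X - C (1:ℝ)) ^ (d - i) ∣ derivative (U d i) := by
      have h1 : (X - C (1:ℝ)) ^ (d + 1 - i) ∣ U d i :=
        ⟨C (ε * ((d:ℝ) + 2) ^ i) * (X * ∏ k ∈ Finset.range i, (X - C (b k))),
          by rw [hU]; ring⟩
      have h2 := pow_sub_one_dvd_derivative_of_pow_dvd h1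
      have he : d + 1 - i - 1 = d - i := by omega
      rwa [he] at h2
    have hsne : ∀ k l, k ≤ i → l ≤ i → k ≠ l → s k ≠ s l := by
      intro k l hk hl hne
      rcases Nat.lt_or_ge k l with h | h
      · exact ne_of_lt (hsmono k l h hl)
      · exact (ne_of_lt (hsmono l k (by omega) hk)).symm
    have hdvd2 : (∏ k ∈ Finset.range (i + 1), (X - C (s k))) ∣ derivative (U d i) := by
      refine Finset.prod_dvd_of_coprime ?_ ?_
      · intro k hk l hl hne
        have hk' : k ≤ i := by
          have := Finset.mem_range.mp (Finset.mem_coe.mp hk); omega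
        have hl' : l ≤ i := by
          have := Finset.mem_range.mp (Finset.mem_coe.mp hl); omega
        exact isCoprime_X_sub_C_of_isUnit_sub
          ((sub_ne_zero_of_ne (hsne k l hk' hl' hne)).isUnit)
      · intro k hk
        have hk' : k ≤ i := by
          have := Finset.mem_range.mp hk; omega
        exact dvd_iff_isRoot.mpr (hs k hk').2
    have hcop : IsCoprime ((X - C (1:ℝ)) ^ (d - i))
        (∏ k ∈ Finset.range (i + 1), (X - C (s k))) := by
      apply IsCoprime.pow_left
      apply IsCoprime.prod_right
      intro k hk
      have hk' : k ≤ i := by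
        have := Finset.mem_range.mp hk; omega
      exact isCoprime_X_sub_C_of_isUnit_sub
        ((sub_ne_zero_of_ne (hs01 k hk').2.ne').isUnit)
    obtain ⟨v, hv⟩ := hcop.mul_dvd hdvd1 hdvd2
    have hPm : ((X - C (1:ℝ)) ^ (d - i) *
        ∏ k ∈ Finset.range (i + 1), (X - C (s k))).Monic :=
      ((monic_X_sub_C 1).pow _).mul
        (monic_prod_of_monic _ _ fun k _ => monic_X_sub_C _)
    have hprodsdeg : (∏ k ∈ Finset.range (i + 1), (X - C (s k))).natDegree = i + 1 := by
      rw [natDegree_prod _ _ fun k _ => X_sub_C_ne_zero _]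
      simp [natDegree_X_sub_C]
    have hPdeg : ((X - C (1:ℝ)) ^ (d - i) *
        ∏ k ∈ Finset.range (i + 1), (X - C (s k))).natDegree = d + 1 := by
      rw [((monic_X_sub_C (1:ℝ)).pow _).natDegree_mul
          (monic_prod_of_monic _ _ fun k _ => monic_X_sub_C _),
        natDegree_pow, natDegree_X_sub_C, hprodsdeg]
      omega
    have hvne : v ≠ 0 := fun h => hDune (by rw [hv, h, mul_zero])
    have hDdegle : (derivative (U d i)).natDegree ≤ d + 1 := by
      have := natDegree_derivative_le (U d i)
      omega
    have hvdeg : v.natDegree = 0 := by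
      rw [hv, natDegree_mul hPm.ne_zero hvne, hPdeg] at hDdegle
      omega
    have hva : v = C (v.coeff 0) := eq_C_of_natDegree_eq_zero hvdeg
    set a : ℝ := v.coeff 0 with ha
    -- identify the constant a
    have hXPm : (X * ((X - C (1:ℝ)) ^ (d - i) *
        ∏ k ∈ Finset.range (i + 1), (X - C (s k)))).Monic := monic_X.mul hPm
    have hXPdeg : (X * ((X - C (1:ℝ)) ^ (d - i) *
        ∏ k ∈ Finset.range (i + 1), (X - C (s k)))).natDegree = d + 2 := by
      rw [monic_X.natDegree_mul hPm, natDegree_X, hPdeg]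
      omega
    have htop : a = ε * ((d:ℝ) + 2) ^ (i + 1) := by
      have h1 := U_coeff_top d (i + 1)
      rw [U_succ, hv, hva] at h1
      have h2 : X * (((X - C (1:ℝ)) ^ (d - i) *
          (∏ k ∈ Finset.range (i + 1), (X - C (s k)))) * C a)
          = X * ((X - C (1:ℝ)) ^ (d - i) *
          (∏ k ∈ Finset.range (i + 1), (X - C (s k)))) * C a := by ring
      rw [h2, coeff_mul_C, ← hXPdeg, hXPm.coeff_natDegree, one_mul] at h1
      rw [hε]
      exact h1
    -- conclude
    refine ⟨s, ?_, ?_, ?_⟩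
    · intro k hk
      exact hs01 k (by omega)
    · intro k l hkl hl
      exact hsmono k l hkl (by omega)
    · have he : d + 1 - (i + 1) = d - i := by omega
      rw [U_succ, hv, hva, htop, he]
      ring

lemma eckhoff_eval (d : ℕ) {z : ℂ} (hz : z ≠ 0) :
    (eckhoffSPoly d).eval z
      = z ^ (d + 2) * (((U d d).map (algebraMap ℝ ℂ)).eval z⁻¹) := by
  rw [eckhoffSPoly, U, Polynomial.map_sum, eval_finset_sum, eval_finset_sum, Finset.mul_sum]
  refine Finset.sum_congr rfl fun j hj => ?_
  have hj' : j ≤ d + 1 := by have := Finset.mem_range.mp hj; omega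
  simp only [Polynomial.map_mul, Polynomial.map_pow, map_C, map_X, eval_mul, eval_pow,
    eval_C, eval_X]
  have hcast : (algebraMap ℝ ℂ) ((-1 : ℝ) ^ j * (((d + 1).choose j : ℕ) : ℝ) * ((j : ℝ) + 1) ^ d)
      = (-1 : ℂ) ^ j * (((d + 1).choose j : ℕ) : ℂ) * ((j : ℂ) + 1) ^ d := by
    simp only [Complex.coe_algebraMap]
    push_cast
    ring
  rw [hcast]
  have hzp : z ^ (d + 2) = z ^ (d + 1 - j) * z ^ (j + 1) := by
    rw [← pow_add]; congr 1; omega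
  have hzj : (z : ℂ) ^ (j + 1) ≠ 0 := pow_ne_zero _ hz
  rw [hzp, inv_pow]
  field_simp

lemma eckhoff_coeff_top (d : ℕ) : (eckhoffSPoly d).coeff (d + 1) = 1 := by
  rw [eckhoffSPoly, finset_sum_coeff, Finset.sum_eq_single 0]
  · simp
  · intro j hj hne
    rw [coeff_C_mul, coeff_X_pow, if_neg (by have := Finset.mem_range.mp hj; omega), mul_zero]
  · intro h
    exact absurd (Finset.mem_range.mpr (by omega)) h

lemma eckhoff_natDegree_le (d : ℕ) : (eckhoffSPoly d).natDegree ≤ d + 1 := by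
  refine natDegree_sum_le_of_forall_le _ _ fun j hj => ?_
  exact le_trans (natDegree_C_mul_X_pow_le _ _) (by omega)

lemma eckhoff_monic (d : ℕ) : (eckhoffSPoly d).Monic :=
  monic_of_natDegree_le_of_coeff_eq_one (d + 1) (eckhoff_natDegree_le d) (eckhoff_coeff_top d)

/-- `s_d^d` is square-free and all of its complex roots are real and lie
in `[1, ∞)`. -/
theorem eckhoffSPoly_squarefree_real_roots (d : ℕ) :
    Squarefree (eckhoffSPoly d) ∧
    ∀ z : ℂ, (eckhoffSPoly d).IsRoot z → ∃ x : ℝ, 1 ≤ x ∧ z = (x : ℂ) := by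
  obtain ⟨b, hb01, hbmono, hU⟩ := U_factor d d le_rfl
  set ρ : ℕ → ℝ := fun k => if k = 0 then 1 else (b (k - 1))⁻¹ with hρ
  have hρ0 : ρ 0 = 1 := by simp [hρ]
  have hρs : ∀ k, k ≠ 0 → ρ k = (b (k - 1))⁻¹ := by
    intro k hk; simp [hρ, hk]
  have hρgt : ∀ k, k ≠ 0 → k < d + 1 → 1 < ρ k := by
    intro k hk hk'
    rw [hρs k hk]
    exact (one_lt_inv₀ (hb01 _ (by omega)).1).mpr (hb01 _ (by omega)).2
  have hρ1 : ∀ k, k < d + 1 → 1 ≤ ρ k := by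
    intro k hk
    rcases Nat.eq_zero_or_pos k with h | h
    · rw [h, hρ0]
    · exact le_of_lt (hρgt k (by omega) hk)
  have hρinj : ∀ k l, k < d + 1 → l < d + 1 → ρ k = ρ l → k = l := by
    intro k l hk hl he
    by_contra hne
    rcases Nat.eq_zero_or_pos k with hk0 | hk0
    · rw [hk0, hρ0] at he
      exact absurd he.symm (ne_of_gt (hρgt l (by omega) hl))
    · rcases Nat.eq_zero_or_pos l with hl0 | hl0
      · rw [hl0, hρ0] at he
        exact absurd he (ne_of_gt (hρgt k (by omega) hk))
      · rw [hρs k (by omega), hρs l (by omega)] at he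
        have hbb : b (k - 1) = b (l - 1) := inv_injective he
        rcases Nat.lt_trichotomy (k - 1) (l - 1) with h | h | h
        · exact absurd hbb (ne_of_lt (hbmono _ _ h (by omega)))
        · omega
        · exact absurd hbb.symm (ne_of_lt (hbmono _ _ h (by omega)))
  -- evaluation of U d d at the reciprocal points
  have hUroot : ∀ k, k < d + 1 → (U d d).eval ((ρ k)⁻¹) = 0 := by
    intro k hk
    rcases Nat.eq_zero_or_pos k with hk0 | hk0
    · have : (ρ k)⁻¹ = 1 := by simp [hρ, hk0]
      rw [this, hU]
      simp only [eval_mul, eval_pow, eval_sub, eval_X, eval_C, eval_one, sub_self]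
      rw [zero_pow (by omega : d + 1 - d ≠ 0)]
      ring
    · have : (ρ k)⁻¹ = b (k - 1) := by
        simp only [hρ, if_neg (by omega : ¬ k = 0), inv_inv]
      rw [this, hU]
      simp only [eval_mul, eval_pow, eval_prod, eval_sub, eval_X, eval_C]
      rw [Finset.prod_eq_zero (Finset.mem_range.mpr (by omega : k - 1 < d)) (by ring)]
      ring
  have hroot : ∀ k, k < d + 1 → (eckhoffSPoly d).IsRoot ((ρ k : ℝ) : ℂ) := by
    intro k hk
    have hpos : (0 : ℝ) < ρ k := lt_of_lt_of_le one_pos (hρ1 k hk)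
    have hne0 : ((ρ k : ℝ) : ℂ) ≠ 0 := Complex.ofReal_ne_zero.mpr (ne_of_gt hpos)
    rw [IsRoot, eckhoff_eval d hne0]
    have hinv : ((ρ k : ℝ) : ℂ)⁻¹ = (((ρ k)⁻¹ : ℝ) : ℂ) := by
      rw [Complex.ofReal_inv]
    rw [hinv]
    have h0 : (((U d d).map (algebraMap ℝ ℂ)).eval (algebraMap ℝ ℂ ((ρ k)⁻¹))) = 0 := by
      rw [Polynomial.eval_map, Polynomial.eval₂_at_apply, hUroot k hk, map_zero]
    rw [Complex.coe_algebraMap] at h0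
    rw [h0, mul_zero]
  -- the product of distinct linear factors
  set P : Polynomial ℂ := ∏ k ∈ Finset.range (d + 1), (X - C ((ρ k : ℝ) : ℂ)) with hP
  have hρCinj : ∀ k ∈ Finset.range (d + 1), ∀ l ∈ Finset.range (d + 1),
      ((ρ k : ℝ) : ℂ) = ((ρ l : ℝ) : ℂ) → k = l := by
    intro k hk l hl he
    exact hρinj k l (Finset.mem_range.mp hk) (Finset.mem_range.mp hl)
      (Complex.ofReal_injective he)
  have hPdvd : P ∣ eckhoffSPoly d := by
    refine Finset.prod_dvd_of_coprime ?_ ?_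
    · intro k hk l hl hne
      refine isCoprime_X_sub_C_of_isUnit_sub ((sub_ne_zero_of_ne ?_).isUnit)
      intro he
      exact hne (hρCinj k (Finset.mem_coe.mp hk) l (Finset.mem_coe.mp hl) he)
    · intro k hk
      exact dvd_iff_isRoot.mpr (hroot k (Finset.mem_range.mp hk))
  have hPm : P.Monic := monic_prod_of_monic _ _ fun k _ => monic_X_sub_C _
  have hPdeg : P.natDegree = d + 1 := by
    rw [hP, natDegree_prod _ _ fun k _ => X_sub_C_ne_zero _]
    simp [natDegree_X_sub_C]
  obtain ⟨v, hv⟩ := hPdvd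
  have hEne : eckhoffSPoly d ≠ 0 := (eckhoff_monic d).ne_zero
  have hvne : v ≠ 0 := fun h => hEne (by rw [hv, h, mul_zero])
  have hvdeg : v.natDegree = 0 := by
    have h1 := eckhoff_natDegree_le d
    rw [hv, natDegree_mul hPm.ne_zero hvne, hPdeg] at h1
    omega
  have hva : v = C (v.coeff 0) := eq_C_of_natDegree_eq_zero hvdeg
  have hv1 : v = 1 := by
    have h1 := eckhoff_coeff_top d
    rw [hv, hva, coeff_mul_C, ← hPdeg, hPm.coeff_natDegree, one_mul] at h1
    rw [hva, h1, map_one]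
  have hEP : eckhoffSPoly d = P := by rw [hv, hv1, mul_one]
  constructor
  · rw [hEP, hP]
    exact (Polynomial.separable_prod_X_sub_C_iff'.mpr hρCinj).squarefree
  · intro z hz
    rw [hEP, IsRoot, hP, eval_prod] at hz
    obtain ⟨k, hk, hk0⟩ := Finset.prod_eq_zero_iff.mp hz
    simp only [eval_sub, eval_X, eval_C, sub_eq_zero] at hk0
    exact ⟨ρ k, hρ1 k (Finset.mem_range.mp hk), hk0⟩
end

section
/- Fix an integer d ≥ 0, a complex number ω with |ω| = 1, and complex numbers α_0, …, α_d with α_d ≠ 0, and let 1 = w_1 < w_2 < … < w_{d+1} denote the d+1 (real, simple) roots of s_d^d. Then for every ε > 0 there exists N_0 such that for every integer N ≥ N_0, the polynomial p_N^d has degree exactly d+1, and its d+1 complex roots (counted with multiplicity) can be enumerated as u_1^{(N)}, …, u_{d+1}^{(N)} so that |u_r^{(N)} − ω^N w_r| ≤ ε for every r = 1, …, d+1. -/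
open Complex

/-- `p_N^d(u) = Σ_{j=0}^{d+1} (−1)^j C(d+1, j) m_{(j+1)N} u^{d+1−j}` as a polynomial. -/
noncomputable def eckhoffPPoly (d N : ℕ) (ω : ℂ) (α : ℕ → ℂ) : Polynomial ℂ :=
  ∑ j ∈ Finset.range (d + 2),
    Polynomial.C ((-1 : ℂ) ^ j * ((d + 1).choose j : ℂ) * eckhoffM d ω α ((j + 1) * N)) *
      Polynomial.X ^ (d + 1 - j)

section Aux

open Polynomial Filter Topology

lemma eckhoff_aux_pow_card_le_prod (s : Multiset ℝ) (δ : ℝ) (hδ : 0 ≤ δ)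
    (h : ∀ x ∈ s, δ ≤ x) : δ ^ Multiset.card s ≤ s.prod := by
  induction s using Multiset.induction with
  | empty => simp
  | cons a t ih =>
    rw [Multiset.prod_cons, Multiset.card_cons, pow_succ']
    exact mul_le_mul (h a (Multiset.mem_cons_self a t))
      (ih fun x hx => h x (Multiset.mem_cons_of_mem hx))
      (pow_nonneg hδ _) ((hδ.trans (h a (Multiset.mem_cons_self a t))).trans (le_refl _))

lemma eckhoff_aux_norm_prod (s : Multiset ℂ) : ‖s.prod‖ = (s.map norm).prod := by
  induction s using Multiset.induction with
  | empty => simp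
  | cons a t ih => simp [norm_mul, ih]

lemma eckhoff_exists_root_near (p : Polynomial ℂ) (hp : p ≠ 0) (a : ℂ) (δ : ℝ) (hδ : 0 < δ)
    (h : ‖p.eval a‖ < ‖p.leadingCoeff‖ * δ ^ p.natDegree) :
    ∃ u ∈ p.roots, ‖a - u‖ < δ := by
  have hsplit : Splits p := IsAlgClosed.splits p
  have hcard : p.roots.card = p.natDegree := (splits_iff_card_roots).mp hsplit
  by_contra hcon
  push_neg at hcon
  have hprod : p = Polynomial.C p.leadingCoeff * (p.roots.map fun a => X - Polynomial.C a).prod :=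
    hsplit.eq_prod_roots
  have heval : p.eval a = p.leadingCoeff * (p.roots.map fun u => a - u).prod := by
    conv_lhs => rw [hprod]
    simp [eval_multiset_prod, Multiset.map_map, Function.comp]
  have hnorm : ‖p.eval a‖ = ‖p.leadingCoeff‖ * ((p.roots.map fun u => a - u).map norm).prod := by
    rw [heval, norm_mul, eckhoff_aux_norm_prod]
  have hge : δ ^ p.natDegree ≤ ((p.roots.map fun u => a - u).map norm).prod := by
    rw [← hcard]
    have := eckhoff_aux_pow_card_le_prod ((p.roots.map fun u => a - u).map norm) δ hδ.le ?_
    · simpa using this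
    · intro x hx
      simp only [Multiset.mem_map] at hx
      obtain ⟨y, ⟨u, hu, rfl⟩, rfl⟩ := hx
      exact hcon u hu
  have hlead : 0 < ‖p.leadingCoeff‖ := by
    simpa using (leadingCoeff_ne_zero.mpr hp)
  nlinarith [hnorm, h, mul_le_mul_of_nonneg_left hge hlead.le]

lemma eckhoff_coeff_top_s12 (d N : ℕ) (ω : ℂ) (α : ℕ → ℂ) :
    (eckhoffPPoly d N ω α).coeff (d + 1) =
      ω ^ N * ∑ ℓ ∈ Finset.range (d + 1), α ℓ * (N : ℂ) ^ ℓ := by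
  rw [eckhoffPPoly, finset_sum_coeff]
  rw [Finset.sum_eq_single 0]
  · rw [coeff_C_mul, Nat.sub_zero, coeff_X_pow, if_pos rfl, mul_one]
    norm_num [eckhoffM]
  · intro j hj hj0
    rw [coeff_C_mul, coeff_X_pow, if_neg, mul_zero]
    simp only [Finset.mem_range] at hj
    omega
  · intro h
    simp at h

lemma eckhoff_degree_le (d N : ℕ) (ω : ℂ) (α : ℕ → ℂ) :
    (eckhoffPPoly d N ω α).degree ≤ (d + 1 : ℕ) := by
  refine (degree_sum_le _ _).trans ?_
  rw [Finset.sup_le_iff]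
  intro j hj
  refine (degree_C_mul_X_pow_le _ _).trans ?_
  exact Nat.cast_le.mpr (by omega)

lemma eckhoff_degree (d N : ℕ) (ω : ℂ) (α : ℕ → ℂ) (hω : ω ≠ 0)
    (hL : ∑ ℓ ∈ Finset.range (d + 1), α ℓ * (N : ℂ) ^ ℓ ≠ 0) :
    (eckhoffPPoly d N ω α).degree = (d + 1 : ℕ) := by
  apply le_antisymm (eckhoff_degree_le d N ω α)
  apply le_degree_of_ne_zero
  rw [eckhoff_coeff_top_s12]
  exact mul_ne_zero (pow_ne_zero _ hω) hL

lemma eckhoff_eval_s12 (d N : ℕ) (ω : ℂ) (α : ℕ → ℂ) (x : ℝ) :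
    (eckhoffPPoly d N ω α).eval (ω ^ N * (x : ℂ)) =
      ω ^ (N * (d + 2)) *
        ∑ ℓ ∈ Finset.range (d + 1), α ℓ * (N : ℂ) ^ ℓ * ((eckhoffS d ℓ x : ℝ) : ℂ) := by
  have key : (eckhoffPPoly d N ω α).eval (ω ^ N * (x : ℂ)) =
      ∑ j ∈ Finset.range (d + 2), ∑ ℓ ∈ Finset.range (d + 1),
        ω ^ (N * (d + 2)) * (α ℓ * (N : ℂ) ^ ℓ *
          ((-1 : ℂ) ^ j * ((d + 1).choose j : ℂ) * ((j : ℂ) + 1) ^ ℓ * (x : ℂ) ^ (d + 1 - j))) := by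
    rw [eckhoffPPoly, eval_finset_sum]
    apply Finset.sum_congr rfl
    intro j hj
    simp only [Finset.mem_range] at hj
    have hpow : ω ^ ((j + 1) * N) * (ω ^ N) ^ (d + 1 - j) = ω ^ (N * (d + 2)) := by
      rw [← pow_mul, ← pow_add]
      congr 1
      rw [Nat.mul_comm (j+1) N, ← Nat.mul_add]
      congr 1
      omega
    simp only [eval_mul, eval_C, eval_pow, eval_X, eckhoffM, mul_pow]
    rw [Finset.mul_sum, Finset.mul_sum, Finset.sum_mul]
    apply Finset.sum_congr rfl
    intro ℓ _
    rw [← hpow]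
    push_cast [mul_pow]
    ring
  rw [key, Finset.sum_comm, Finset.mul_sum]
  apply Finset.sum_congr rfl
  intro ℓ _
  rw [eckhoffS]
  push_cast
  rw [Finset.mul_sum, Finset.mul_sum]

lemma eckhoff_tendsto_inv :
    Tendsto (fun N : ℕ => ((N : ℂ))⁻¹) atTop (𝓝 0) := by
  rw [tendsto_zero_iff_norm_tendsto_zero]
  have : (fun N : ℕ => ‖((N : ℂ))⁻¹‖) = fun N : ℕ => ((N : ℝ))⁻¹ := by
    funext N
    rw [norm_inv, Complex.norm_natCast]
  rw [this]
  exact tendsto_inv_atTop_zero.comp tendsto_natCast_atTop_atTop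

lemma eckhoff_tendsto_pow_div_pow (ℓ d : ℕ) (h : ℓ < d) :
    Tendsto (fun N : ℕ => (N : ℂ) ^ ℓ / (N : ℂ) ^ d) atTop (𝓝 0) := by
  have h2 : Tendsto (fun N : ℕ => (((N : ℂ))⁻¹) ^ (d - ℓ)) atTop (𝓝 0) := by
    have := eckhoff_tendsto_inv.pow (d - ℓ)
    rwa [zero_pow (by omega)] at this
  apply h2.congr'
  filter_upwards [eventually_ge_atTop 1] with N hN
  have hN0 : (N : ℂ) ≠ 0 := Nat.cast_ne_zero.mpr (by omega)
  rw [inv_pow, inv_eq_one_div, eq_div_iff (pow_ne_zero _ hN0), div_mul_eq_mul_div,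
    one_mul, div_eq_iff (pow_ne_zero _ hN0), ← pow_add]
  congr 1
  omega

lemma eckhoff_tendsto_sum_div_pow (c : ℕ → ℂ) (d : ℕ) :
    Tendsto (fun N : ℕ => (∑ ℓ ∈ Finset.range d, c ℓ * (N : ℂ) ^ ℓ) / (N : ℂ) ^ d)
      atTop (𝓝 0) := by
  have : (fun N : ℕ => (∑ ℓ ∈ Finset.range d, c ℓ * (N : ℂ) ^ ℓ) / (N : ℂ) ^ d) =
      fun N : ℕ => ∑ ℓ ∈ Finset.range d, c ℓ * ((N : ℂ) ^ ℓ / (N : ℂ) ^ d) := by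
    funext N
    rw [Finset.sum_div]
    exact Finset.sum_congr rfl fun ℓ _ => by ring
  rw [this]
  have h0 : (0 : ℂ) = ∑ ℓ ∈ Finset.range d, c ℓ * 0 := by simp
  rw [h0]
  exact tendsto_finset_sum _ fun ℓ hℓ =>
    (eckhoff_tendsto_pow_div_pow ℓ d (Finset.mem_range.mp hℓ)).const_mul (c ℓ)

lemma eckhoff_tendsto_lead_div_pow (α : ℕ → ℂ) (d : ℕ) :
    Tendsto (fun N : ℕ => (∑ ℓ ∈ Finset.range (d + 1), α ℓ * (N : ℂ) ^ ℓ) / (N : ℂ) ^ d)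
      atTop (𝓝 (α d)) := by
  have key : Tendsto (fun N : ℕ =>
      (∑ ℓ ∈ Finset.range d, α ℓ * (N : ℂ) ^ ℓ) / (N : ℂ) ^ d + α d) atTop (𝓝 (0 + α d)) :=
    (eckhoff_tendsto_sum_div_pow α d).add_const (α d)
  rw [zero_add] at key
  apply key.congr'
  filter_upwards [eventually_ge_atTop 1] with N hN
  have hN0 : ((N : ℂ)) ^ d ≠ 0 := pow_ne_zero _ (Nat.cast_ne_zero.mpr (by omega))
  rw [Finset.sum_range_succ, add_div, mul_div_assoc, div_self hN0, mul_one]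

end Aux

/-- if `|ω| = 1`, `α_d ≠ 0` and `1 = w_1 < w_2 < … < w_{d+1}` are the real
simple roots of `s_d^d`, then for every `ε > 0` and all large `N`, `p_N^d` has degree
exactly `d+1` and its roots (with multiplicity) can be enumerated as `u_r^{(N)}` with
`|u_r^{(N)} − ω^N w_r| ≤ ε`. -/
theorem eckhoffPPoly_roots_converge (d : ℕ) (ω : ℂ) (hω : ‖ω‖ = 1) (α : ℕ → ℂ)
    (hα : α d ≠ 0) (w : Fin (d + 1) → ℝ) (hw0 : w 0 = 1) (hwmono : StrictMono w)
    (hwroot : ∀ r, eckhoffS d d (w r) = 0) :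
    ∀ ε : ℝ, 0 < ε → ∃ N₀ : ℕ, ∀ N : ℕ, N₀ ≤ N →
      (eckhoffPPoly d N ω α).degree = (d + 1 : ℕ) ∧
      ∃ u : Fin (d + 1) → ℂ,
        (eckhoffPPoly d N ω α).roots = Multiset.map u (Finset.univ : Finset (Fin (d + 1))).val ∧
        ∀ r, ‖u r - ω ^ N * (w r : ℂ)‖ ≤ ε := by
  intro ε hε
  classical
  obtain ⟨δ', hδ'pos, hδ'⟩ : ∃ δ' : ℝ, 0 < δ' ∧
      ∀ r r' : Fin (d + 1), r ≠ r' → 2 * δ' ≤ |w r - w r'| := by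
    by_cases hS : (Finset.univ.filter
        (fun p : Fin (d + 1) × Fin (d + 1) => p.1 ≠ p.2)).Nonempty
    · refine ⟨(Finset.inf' _ hS fun p => |w p.1 - w p.2|) / 2, ?_, ?_⟩
      · apply div_pos _ two_pos
        rw [Finset.lt_inf'_iff]
        intro p hp
        have hne : p.1 ≠ p.2 := (Finset.mem_filter.mp hp).2
        exact abs_pos.mpr (sub_ne_zero.mpr fun h => hne (hwmono.injective h))
      · intro r r' hrr'
        have hmem : (r, r') ∈ (Finset.univ.filter
            (fun p : Fin (d + 1) × Fin (d + 1) => p.1 ≠ p.2)) :=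
          Finset.mem_filter.mpr ⟨Finset.mem_univ _, hrr'⟩
        have := Finset.inf'_le (fun p => |w p.1 - w p.2|) hmem
        linarith
    · exact ⟨1, one_pos, fun r r' hrr' =>
        absurd ⟨(r, r'), Finset.mem_filter.mpr ⟨Finset.mem_univ _, hrr'⟩⟩ hS⟩
  set δ : ℝ := min ε δ' with hδdef
  have hδpos : 0 < δ := lt_min hε hδ'pos
  have hωnorm : ∀ k : ℕ, ‖ω ^ k‖ = 1 := fun k => by rw [norm_pow, hω, one_pow]
  have hω0 : ω ≠ 0 := fun h => by simp [h] at hω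
  have hαd : (0 : ℝ) < ‖α d‖ := norm_pos_iff.mpr hα
  have hδpow : (0 : ℝ) < δ ^ (d + 1) := pow_pos hδpos _
  -- the three eventual facts
  have h1 : ∀ᶠ N : ℕ in Filter.atTop, 1 ≤ N := Filter.eventually_ge_atTop 1
  have h2 : ∀ᶠ N : ℕ in Filter.atTop,
      ‖α d‖ / 2 < ‖(∑ ℓ ∈ Finset.range (d + 1), α ℓ * (N : ℂ) ^ ℓ) / (N : ℂ) ^ d‖ :=
    ((eckhoff_tendsto_lead_div_pow α d).norm).eventually_const_lt (by linarith)
  have h3 : ∀ᶠ N : ℕ in Filter.atTop, ∀ r : Fin (d + 1),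
      ‖(∑ ℓ ∈ Finset.range d, (α ℓ * ((eckhoffS d ℓ (w r) : ℝ) : ℂ)) * (N : ℂ) ^ ℓ)
        / (N : ℂ) ^ d‖ < (‖α d‖ / 2) * δ ^ (d + 1) := by
    rw [Filter.eventually_all]
    intro r
    have ht := (eckhoff_tendsto_sum_div_pow
      (fun ℓ => α ℓ * ((eckhoffS d ℓ (w r) : ℝ) : ℂ)) d).norm
    rw [norm_zero] at ht
    exact ht.eventually_lt_const (mul_pos (by linarith : (0:ℝ) < ‖α d‖ / 2) hδpow)
  obtain ⟨N₀, hN₀⟩ := Filter.eventually_atTop.mp ((h1.and h2).and h3)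
  refine ⟨N₀, fun N hN => ?_⟩
  obtain ⟨⟨hN1, hLfact⟩, hEfact⟩ := hN₀ N hN
  have hNR : (0 : ℝ) < (N : ℝ) ^ d := pow_pos (by exact_mod_cast hN1) d
  have hNC : ((N : ℂ)) ^ d ≠ 0 := pow_ne_zero _ (Nat.cast_ne_zero.mpr (by omega))
  set L : ℂ := ∑ ℓ ∈ Finset.range (d + 1), α ℓ * (N : ℂ) ^ ℓ with hLdef
  have hLnorm_eq : ‖L / (N : ℂ) ^ d‖ = ‖L‖ / (N : ℝ) ^ d := by
    rw [norm_div, norm_pow, Complex.norm_natCast]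
  rw [hLnorm_eq] at hLfact
  have hL0 : L ≠ 0 := by
    intro h
    rw [h, norm_zero, zero_div] at hLfact
    linarith
  have hdeg : (eckhoffPPoly d N ω α).degree = (d + 1 : ℕ) := eckhoff_degree d N ω α hω0 hL0
  refine ⟨hdeg, ?_⟩
  set p : Polynomial ℂ := eckhoffPPoly d N ω α with hpdef
  have hp0 : p ≠ 0 := fun h => by
    rw [h, Polynomial.degree_zero] at hdeg
    norm_cast at hdeg
  have hnat : p.natDegree = d + 1 := Polynomial.natDegree_eq_of_degree_eq_some hdeg
  have hleadnorm : ‖p.leadingCoeff‖ = ‖L‖ := by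
    rw [Polynomial.leadingCoeff, hnat, hpdef, eckhoff_coeff_top_s12, norm_mul, hωnorm, one_mul]
  -- for each r, a nearby root
  have hroots : ∀ r : Fin (d + 1), ∃ u ∈ p.roots, ‖ω ^ N * ((w r : ℝ) : ℂ) - u‖ < δ := by
    intro r
    apply eckhoff_exists_root_near p hp0 _ δ hδpos
    have heval : ‖p.eval (ω ^ N * ((w r : ℝ) : ℂ))‖ =
        ‖∑ ℓ ∈ Finset.range d, (α ℓ * ((eckhoffS d ℓ (w r) : ℝ) : ℂ)) * (N : ℂ) ^ ℓ‖ := by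
      rw [hpdef, eckhoff_eval_s12, norm_mul, hωnorm, one_mul]
      congr 1
      rw [Finset.sum_range_succ, hwroot r, Complex.ofReal_zero, mul_zero, add_zero]
      exact Finset.sum_congr rfl fun ℓ _ => by ring
    have hE := hEfact r
    have hEnorm_eq : ‖(∑ ℓ ∈ Finset.range d,
        (α ℓ * ((eckhoffS d ℓ (w r) : ℝ) : ℂ)) * (N : ℂ) ^ ℓ) / (N : ℂ) ^ d‖ =
        ‖∑ ℓ ∈ Finset.range d, (α ℓ * ((eckhoffS d ℓ (w r) : ℝ) : ℂ)) * (N : ℂ) ^ ℓ‖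
          / (N : ℝ) ^ d := by
      rw [norm_div, norm_pow, Complex.norm_natCast]
    rw [hEnorm_eq] at hE
    have hE' : ‖∑ ℓ ∈ Finset.range d, (α ℓ * ((eckhoffS d ℓ (w r) : ℝ) : ℂ)) * (N : ℂ) ^ ℓ‖ <
        (‖α d‖ / 2) * δ ^ (d + 1) * (N : ℝ) ^ d := (div_lt_iff₀ hNR).mp hE
    have hL' : ‖α d‖ / 2 * (N : ℝ) ^ d < ‖L‖ := (lt_div_iff₀ hNR).mp hLfact
    rw [heval, hleadnorm, hnat]
    nlinarith [mul_lt_mul_of_pos_right hL' hδpow]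
  choose u humem hudist using hroots
  -- injectivity
  have hgap : ∀ r r' : Fin (d + 1), r ≠ r' →
      ‖ω ^ N * ((w r : ℝ) : ℂ) - ω ^ N * ((w r' : ℝ) : ℂ)‖ = |w r - w r'| := by
    intro r r' _
    rw [← mul_sub, norm_mul, hωnorm, one_mul, ← Complex.ofReal_sub, Complex.norm_real,
      Real.norm_eq_abs]
  have huinj : Function.Injective u := by
    intro r r' h
    by_contra hrr'
    have h1 := hudist r
    have h2 := hudist r'
    have h3 := hδ' r r' hrr'
    have h4 := hgap r r' hrr'
    have : ‖ω ^ N * ((w r : ℝ) : ℂ) - ω ^ N * ((w r' : ℝ) : ℂ)‖ ≤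
        ‖ω ^ N * ((w r : ℝ) : ℂ) - u r‖ + ‖u r' - ω ^ N * ((w r' : ℝ) : ℂ)‖ := by
      rw [h]
      exact norm_sub_le_norm_sub_add_norm_sub _ _ _
    have h5 : ‖u r' - ω ^ N * ((w r' : ℝ) : ℂ)‖ < δ := by
      rw [norm_sub_rev]; exact h2
    have hδle : δ ≤ δ' := min_le_right _ _
    rw [h4] at this
    linarith
  -- roots as multiset
  have hcard : Multiset.card p.roots = d + 1 := by
    rw [← hnat]
    exact (Polynomial.splits_iff_card_roots.mp (IsAlgClosed.splits p))
  have hnodup : (Multiset.map u (Finset.univ : Finset (Fin (d + 1))).val).Nodup :=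
    Finset.univ.nodup.map huinj
  have hle : Multiset.map u (Finset.univ : Finset (Fin (d + 1))).val ≤ p.roots := by
    rw [Multiset.le_iff_subset hnodup]
    intro x hx
    obtain ⟨r, _, rfl⟩ := Multiset.mem_map.mp hx
    exact humem r
  have hcards : Multiset.card p.roots ≤
      Multiset.card (Multiset.map u (Finset.univ : Finset (Fin (d + 1))).val) := by
    rw [hcard, Multiset.card_map]
    simp
  refine ⟨u, (Multiset.eq_of_le_of_card_le hle hcards).symm, fun r => ?_⟩
  have := hudist r
  rw [norm_sub_rev]
  have hδle : δ ≤ ε := min_le_left _ _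
  linarith
end

section
/- The derivative of p_N^d at the root u = z = ω^N equals (d/du) p_N^d(u) |_{u=z} = (−1)^d · (d+1)! · α_d · N^d · z^{d+1}; in particular, if |ω| = 1 then |(d/du) p_N^d(u) |_{u=z}| = (d+1)! · |α_d| · N^d. -/
open Complex

noncomputable def eckA (n ℓ : ℕ) (x : ℂ) : ℂ :=
  ∑ j ∈ Finset.range (n+1), (-1:ℂ)^j * (n.choose j : ℂ) * (x + j)^ℓ

lemma eckA_succ (n ℓ : ℕ) (x : ℂ) :
    eckA (n+1) ℓ x = eckA n ℓ x - eckA n ℓ (x+1) := by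
  unfold eckA
  rw [Finset.sum_range_succ' _ (n+1)]
  have h1 : ∀ i ∈ Finset.range (n+1),
      (-1:ℂ)^(i+1) * (((n+1).choose (i+1) : ℕ) : ℂ) * (x + ((i+1:ℕ):ℂ))^ℓ
      = (-1:ℂ)^(i+1) * ((n.choose (i+1) : ℕ) : ℂ) * (x + ((i+1:ℕ):ℂ))^ℓ
        + (-(-1:ℂ)^i) * ((n.choose i : ℕ) : ℂ) * ((x+1) + (i:ℂ))^ℓ := by
    intro i _
    rw [Nat.choose_succ_succ]
    push_cast
    ring
  rw [Finset.sum_congr rfl h1, Finset.sum_add_distrib]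
  rw [Finset.sum_range_succ (fun i => (-1:ℂ)^(i+1) * ((n.choose (i+1) : ℕ) : ℂ) * (x + ((i+1:ℕ):ℂ))^ℓ)]
  rw [Nat.choose_succ_self]
  rw [Finset.sum_range_succ' (fun j => (-1:ℂ)^j * ((n.choose j : ℕ) : ℂ) * (x + (j:ℂ))^ℓ) n]
  simp [Finset.sum_neg_distrib]
  ring

lemma eckA_eval (n : ℕ) :
    (∀ x : ℂ, ∀ ℓ < n, eckA n ℓ x = 0) ∧
    (∀ x : ℂ, eckA n n x = (-1:ℂ)^n * (n.factorial : ℂ)) := by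
  induction n with
  | zero =>
    constructor
    · intro x ℓ hℓ; omega
    · intro x; simp [eckA]
  | succ n ih =>
    obtain ⟨ih0, ih1⟩ := ih
    have key : ∀ x : ℂ, eckA n (n+1) (x+1) = eckA n (n+1) x + (n+1) * ((-1:ℂ)^n * n.factorial) := by
      intro x
      have expand : ∀ j : ℕ, ((x+1) + (j:ℂ))^(n+1)
          = ∑ i ∈ Finset.range (n+2), (x + (j:ℂ))^i * (((n+1).choose i : ℕ) : ℂ) := by
        intro j
        have := add_pow (x + (j:ℂ)) 1 (n+1)
        simp only [one_pow, mul_one] at this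
        rw [show (x+1) + (j:ℂ) = (x + j) + 1 by ring, this]
      unfold eckA
      calc ∑ j ∈ Finset.range (n+1), (-1:ℂ)^j * (n.choose j : ℂ) * ((x+1) + (j:ℂ))^(n+1)
          = ∑ j ∈ Finset.range (n+1), ∑ i ∈ Finset.range (n+2),
              (((n+1).choose i : ℕ) : ℂ) * ((-1:ℂ)^j * (n.choose j : ℂ) * (x + (j:ℂ))^i) := by
            refine Finset.sum_congr rfl fun j _ => ?_
            rw [expand j, Finset.mul_sum]
            refine Finset.sum_congr rfl fun i _ => ?_
            ring
        _ = ∑ i ∈ Finset.range (n+2), (((n+1).choose i : ℕ) : ℂ) * eckA n i x := by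
            rw [Finset.sum_comm]
            refine Finset.sum_congr rfl fun i _ => ?_
            rw [eckA, Finset.mul_sum]
        _ = eckA n (n+1) x + (n+1) * ((-1:ℂ)^n * n.factorial) := by
            rw [Finset.sum_range_succ]
            simp only [Nat.choose_self, Nat.cast_one, one_mul]
            rw [Finset.sum_eq_single n]
            · rw [ih1 x, Nat.choose_succ_self_right]; push_cast; ring
            · intro i hi hne
              rw [ih0 x i (by simp at hi; omega), mul_zero]
            · intro h; simp at h
    constructor
    · intro x ℓ hℓ
      rw [eckA_succ]
      rcases Nat.lt_succ_iff_lt_or_eq.mp hℓ with h | rfl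
      · rw [ih0 x ℓ h, ih0 (x+1) ℓ h, sub_zero]
      · rw [ih1 x, ih1 (x+1), sub_self]
    · intro x
      rw [eckA_succ, key x]
      push_cast [Nat.factorial_succ]
      ring

/-- `(d/du)p_N^d(u)|_{u=z} = (−1)^d (d+1)! α_d N^d z^{d+1}` where `z = ω^N`;
in particular for `|ω| = 1` its modulus equals `(d+1)!·|α_d|·N^d`. -/
theorem eckhoffP_deriv_at_root (d N : ℕ) (hN : 1 ≤ N) (ω : ℂ) (α : ℕ → ℂ) :
    deriv (eckhoffP d N ω α) (ω ^ N)
        = (-1 : ℂ) ^ d * (Nat.factorial (d + 1) : ℂ) * α d * (N : ℂ) ^ d *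
            (ω ^ N) ^ (d + 1) ∧
      (‖ω‖ = 1 →
        ‖deriv (eckhoffP d N ω α) (ω ^ N)‖
          = (Nat.factorial (d + 1) : ℝ) * ‖α d‖ * (N : ℝ) ^ d) := by
  set z : ℂ := ω ^ N with hz
  have hderiv : HasDerivAt (eckhoffP d N ω α)
      (∑ j ∈ Finset.range (d + 2),
        (-1 : ℂ) ^ j * ((d + 1).choose j : ℂ) * eckhoffM d ω α ((j + 1) * N) *
          (((d + 1 - j : ℕ) : ℂ) * z ^ (d + 1 - j - 1))) z := by
    unfold eckhoffP
    apply HasDerivAt.fun_sum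
    intro j _
    exact (hasDerivAt_pow (d + 1 - j) z).const_mul _
  have hD : (∑ j ∈ Finset.range (d + 2),
        (-1 : ℂ) ^ j * ((d + 1).choose j : ℂ) * eckhoffM d ω α ((j + 1) * N) *
          (((d + 1 - j : ℕ) : ℂ) * z ^ (d + 1 - j - 1)))
      = (-1 : ℂ) ^ d * (Nat.factorial (d + 1) : ℂ) * α d * (N : ℂ) ^ d * z ^ (d + 1) := by
    have step1 : ∀ j ∈ Finset.range (d + 2),
        (-1 : ℂ) ^ j * ((d + 1).choose j : ℂ) * eckhoffM d ω α ((j + 1) * N) *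
          (((d + 1 - j : ℕ) : ℂ) * z ^ (d + 1 - j - 1))
        = ∑ ℓ ∈ Finset.range (d + 1),
            ((d : ℂ) + 1) * z ^ (d + 1) * (α ℓ * (N : ℂ) ^ ℓ *
              ((-1 : ℂ) ^ j * ((d.choose j : ℕ) : ℂ) * ((1 : ℂ) + (j : ℂ)) ^ ℓ)) := by
      intro j hj
      simp only [Finset.mem_range] at hj
      unfold eckhoffM
      rcases Nat.lt_succ_iff_lt_or_eq.mp hj with hjd | rfl
      · -- j ≤ d
        have hjd' : j ≤ d := by omega
        have hpow : ω ^ ((j + 1) * N) * z ^ (d + 1 - j - 1) = z ^ (d + 1) := by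
          obtain ⟨k, rfl⟩ := Nat.le.dest hjd'
          have h1 : j + k + 1 - j - 1 = k := by omega
          rw [h1, hz, ← pow_mul, ← pow_mul, ← pow_add,
            show (j + 1) * N + N * k = N * (j + k + 1) by ring]
        have hcast : ((d + 1 - j : ℕ) : ℂ) * (((d + 1).choose j : ℕ) : ℂ)
            = ((d : ℂ) + 1) * ((d.choose j : ℕ) : ℂ) := by
          have h2 : d.choose j * (d + 1) = (d + 1).choose j * (d + 1 - j) :=
            Nat.choose_mul_succ_eq d j
          have h3 := congrArg (Nat.cast : ℕ → ℂ) h2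
          push_cast at h3
          linear_combination -h3
        simp only [Finset.mul_sum, Finset.sum_mul]
        refine Finset.sum_congr rfl fun ℓ _ => ?_
        push_cast [mul_pow]
        linear_combination
          ((-1 : ℂ) ^ j * α ℓ * (((j : ℂ) + 1) ^ ℓ * (N : ℂ) ^ ℓ) *
              (((d + 1 - j : ℕ) : ℂ) * (((d + 1).choose j : ℕ) : ℂ))) * hpow
            + ((-1 : ℂ) ^ j * α ℓ * (((j : ℂ) + 1) ^ ℓ * (N : ℂ) ^ ℓ) * z ^ (d + 1)) * hcast
      · simp [Nat.choose_succ_self]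
    rw [Finset.sum_congr rfl step1, Finset.sum_comm]
    have inner : ∀ ℓ ∈ Finset.range (d + 1),
        (∑ j ∈ Finset.range (d + 2),
          ((d : ℂ) + 1) * z ^ (d + 1) * (α ℓ * (N : ℂ) ^ ℓ *
            ((-1 : ℂ) ^ j * ((d.choose j : ℕ) : ℂ) * ((1 : ℂ) + (j : ℂ)) ^ ℓ)))
        = ((d : ℂ) + 1) * z ^ (d + 1) * (α ℓ * (N : ℂ) ^ ℓ) * eckA d ℓ 1 := by
      intro ℓ _
      rw [Finset.sum_range_succ, Nat.choose_succ_self]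
      rw [eckA, Finset.mul_sum]
      simp only [Nat.cast_zero, mul_zero, zero_mul, add_zero]
      refine Finset.sum_congr rfl fun j _ => ?_
      ring
    rw [Finset.sum_congr rfl inner, Finset.sum_eq_single d]
    · rw [(eckA_eval d).2 1]
      push_cast [Nat.factorial_succ]
      ring
    · intro ℓ hℓ hne
      rw [(eckA_eval d).1 1 ℓ (by simp only [Finset.mem_range] at hℓ; omega), mul_zero]
    · intro h
      simp at h
  refine ⟨by rw [hderiv.deriv]; exact hD, fun hω => ?_⟩
  rw [hderiv.deriv, hD]
  have hzn : ‖z‖ = 1 := by rw [hz, norm_pow, hω, one_pow]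
  simp [norm_mul, norm_pow, hzn, Complex.norm_natCast]
end

section
/- Let ω ∈ ℂ with |ω| = 1, let N ≥ 1 be an integer, and let z̃ ∈ ℂ satisfy |z̃ − ω^N| ≤ ε for some real ε with 0 ≤ ε ≤ 1/2. Then there exists ω̃ ∈ ℂ with ω̃^N = z̃ and |ω̃ − ω| ≤ 3ε/N; that is, extraction of an appropriately chosen N-th root decreases the perturbation by a factor of order 1/N. -/
open Complex

/-- root extraction step. If `|ω| = 1` and `|z̃ − ω^N| ≤ ε ≤ 1/2`, then
some `N`-th root `ω̃` of `z̃` satisfies `|ω̃ − ω| ≤ 3ε/N`. -/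
theorem nth_root_extraction_accuracy (ω : ℂ) (hω : ‖ω‖ = 1) (N : ℕ) (hN : 1 ≤ N)
    (zt : ℂ) (ε : ℝ) (hε0 : 0 ≤ ε) (hε : ε ≤ 1 / 2) (hz : ‖zt - ω ^ N‖ ≤ ε) :
    ∃ ωt : ℂ, ωt ^ N = zt ∧ ‖ωt - ω‖ ≤ 3 * ε / N := by
  have hω0 : ω ≠ 0 := by
    intro h; rw [h] at hω; simp at hω
  have hωN : (ω ^ N : ℂ) ≠ 0 := pow_ne_zero _ hω0
  have hnormωN : ‖(ω : ℂ) ^ N‖ = 1 := by rw [norm_pow, hω, one_pow]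
  set δ : ℂ := zt / ω ^ N - 1 with hδ
  have hδnorm : ‖δ‖ ≤ ε := by
    have : δ = (zt - ω ^ N) / ω ^ N := by rw [hδ, div_sub_one hωN]
    rw [this, norm_div, hnormωN, div_one]; exact hz
  have hδhalf : ‖δ‖ ≤ 1 / 2 := hδnorm.trans hε
  have h1δ : (1 : ℂ) + δ ≠ 0 := by
    intro h
    have : ‖(1 : ℂ)‖ = ‖-δ‖ := by rw [show (1:ℂ) = -δ by linear_combination h]
    simp only [norm_neg, norm_one] at this
    rw [← this] at hδhalf; norm_num at hδhalf
  set w : ℂ := Complex.log (1 + δ) / N with hw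
  have hlog : ‖Complex.log (1 + δ)‖ ≤ (3 / 2) * ‖δ‖ :=
    norm_log_one_add_half_le_self hδhalf
  have hNpos : (0 : ℝ) < N := by exact_mod_cast hN
  have hN1 : (1 : ℝ) ≤ N := by exact_mod_cast hN
  have hwnorm : ‖w‖ ≤ (3 / 2) * ‖δ‖ / N := by
    rw [hw, norm_div]
    simp only [Complex.norm_natCast]
    gcongr
  have hwle : ‖w‖ ≤ 1 := by
    calc ‖w‖ ≤ (3 / 2) * ‖δ‖ / N := hwnorm
      _ ≤ (3 / 2) * (1 / 2) / 1 := by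
          gcongr <;> first | exact hN1 | nlinarith [norm_nonneg δ]
      _ ≤ 1 := by norm_num
  refine ⟨ω * Complex.exp w, ?_, ?_⟩
  · have : (Complex.exp w) ^ N = 1 + δ := by
      rw [← Complex.exp_nat_mul, hw, mul_div_cancel₀ _ (by exact_mod_cast Nat.pos_of_ne_zero (by omega) |>.ne' : (N:ℂ) ≠ 0), Complex.exp_log h1δ]
    rw [mul_pow, this, hδ]
    field_simp
    ring
  · have : ω * Complex.exp w - ω = ω * (Complex.exp w - 1) := by ring
    rw [this, norm_mul, hω, one_mul]
    have h2 : ‖Complex.exp w - 1‖ ≤ 2 * ‖w‖ := by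
      have := Complex.norm_exp_sub_one_le (x := w) (by simpa using hwle)
      simpa using this
    calc ‖Complex.exp w - 1‖ ≤ 2 * ‖w‖ := h2
      _ ≤ 2 * ((3 / 2) * ‖δ‖ / N) := by linarith
      _ ≤ 3 * ε / N := by
          have : 2 * (3 / 2 * ‖δ‖ / (N:ℝ)) = 3 * ‖δ‖ / N := by ring
          rw [this]
          gcongr
end

section
/- For every integer d ≥ 0 there exist constants C_4 > 0 and C_{5,0}, …, C_{5,d} > 0 depending only on d with the following property: for all real numbers A* ≥ B* > 0 and R* > 0 there exists N_0 such that for every integer N ≥ N_0, every ω ∈ ℂ with |ω| = 1, every α_0, …, α_d ∈ ℂ with |α_ℓ| ≤ A* for all ℓ and |α_d| ≥ B*, every choice of perturbed values m̃_{jN} ∈ ℂ (j = 1, …, d+1) with |m̃_{jN} − m_{jN}| ≤ R*·(jN)^{−1}, and every nonzero ω̃ ∈ ℂ with |ω̃ − ω| ≤ C_4 · (R*/B*) · N^{−d−2}, the unique vector (α̃_0, …, α̃_d) ∈ ℂ^{d+1} solving the Vandermonde linear system Σ_{ℓ=0}^{d} α̃_ℓ (jN)^{ℓ} = m̃_{jN}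 · ω̃^{−jN} for j = 1, …, d+1 satisfies |α̃_ℓ − α_ℓ| ≤ C_{5,ℓ} · R* · (1 + A*/B*) · N^{−ℓ−1} for every ℓ = 0, 1, …, d. -/
open Complex

open Finset

lemma aux_norm_pow_sub_pow (x y : ℂ) (M : ℝ) (hM : 1 ≤ M) (hx : ‖x‖ ≤ M) (hy : ‖y‖ ≤ M) (n : ℕ) :
    ‖x ^ n - y ^ n‖ ≤ n * M ^ n * ‖x - y‖ := by
  have h0 : (0:ℝ) ≤ M := le_trans zero_le_one hM
  rw [← geom_sum₂_mul x y n, norm_mul]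
  have hsum : ‖∑ i ∈ range n, x ^ i * y ^ (n - 1 - i)‖ ≤ n * M ^ n := by
    calc ‖∑ i ∈ range n, x ^ i * y ^ (n - 1 - i)‖
        ≤ ∑ i ∈ range n, ‖x ^ i * y ^ (n - 1 - i)‖ := norm_sum_le _ _
      _ ≤ ∑ _i ∈ range n, M ^ n := by
          apply sum_le_sum
          intro i hi
          have hin : i < n := mem_range.mp hi
          rw [norm_mul, norm_pow, norm_pow]
          calc ‖x‖ ^ i * ‖y‖ ^ (n - 1 - i) ≤ M ^ i * M ^ (n - 1 - i) := by
                apply mul_le_mul (pow_le_pow_left₀ (norm_nonneg _) hx i)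
                  (pow_le_pow_left₀ (norm_nonneg _) hy _) (by positivity) (by positivity)
            _ = M ^ (i + (n - 1 - i)) := (pow_add M i _).symm
            _ ≤ M ^ n := pow_le_pow_right₀ hM (by omega)
      _ = n * M ^ n := by rw [sum_const, card_range, nsmul_eq_mul]
  exact mul_le_mul_of_nonneg_right hsum (norm_nonneg _)

noncomputable def eckW (d : ℕ) : Matrix (Fin (d+1)) (Fin (d+1)) ℂ :=
  Matrix.vandermonde (fun i => (i : ℂ) + 1)

lemma eckW_det_ne_zero (d : ℕ) : (eckW d).det ≠ 0 := by
  rw [eckW, Matrix.det_vandermonde]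
  apply Finset.prod_ne_zero_iff.mpr
  intro i _
  apply Finset.prod_ne_zero_iff.mpr
  intro j hj
  have hij : i < j := Finset.mem_Ioi.mp hj
  intro h
  have h2 : ((j:ℕ):ℂ) = ((i:ℕ):ℂ) := by
    have := sub_eq_zero.mp h
    simpa using this
  have := Nat.cast_inj (R := ℂ) |>.mp h2
  omega

lemma eckW_inv_mul (d : ℕ) : (eckW d)⁻¹ * eckW d = 1 :=
  Matrix.nonsing_inv_mul _ (by simpa using eckW_det_ne_zero d)

noncomputable def eckC (d ℓ : ℕ) : ℝ :=
  if h : ℓ < d + 1 then ∑ j, ‖(eckW d)⁻¹ ⟨ℓ, h⟩ j‖ else 0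

lemma eckC_nonneg (d ℓ : ℕ) : 0 ≤ eckC d ℓ := by
  unfold eckC
  split
  · positivity
  · exact le_refl 0


set_option maxHeartbeats 1000000 in
/-- recovery of the magnitudes from the perturbed Vandermonde system.
There are constants `C₄ > 0` and `C₅ℓ > 0` depending only on `d` such that, under the
a-priori bounds, the perturbations `|m̃_{jN} − m_{jN}| ≤ R*(jN)⁻¹` and the jump accuracy
`|ω̃ − ω| ≤ C₄ (R*/B*) N^{−d−2}`, the (unique) solution `α̃` of the linear system
`Σ_ℓ α̃_ℓ (jN)^ℓ = m̃_{jN} ω̃^{−jN}` (`j = 1, …, d+1`) satisfies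
`|α̃_ℓ − α_ℓ| ≤ C₅ℓ R* (1 + A*/B*) N^{−ℓ−1}` for every `ℓ = 0, …, d`. -/
theorem eckhoff_magnitude_recovery_accuracy (d : ℕ) :
    ∃ C₄ : ℝ, 0 < C₄ ∧ ∃ C₅ : ℕ → ℝ, (∀ ℓ, 0 < C₅ ℓ) ∧
      ∀ Astar Bstar Rstar : ℝ, 0 < Bstar → Bstar ≤ Astar → 0 < Rstar →
        ∃ N₀ : ℕ, ∀ N : ℕ, N₀ ≤ N → ∀ ω : ℂ, ‖ω‖ = 1 →
          ∀ α : ℕ → ℂ, (∀ ℓ ≤ d, ‖α ℓ‖ ≤ Astar) → Bstar ≤ ‖α d‖ →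
          ∀ mt : ℕ → ℂ,
            (∀ j, 1 ≤ j → j ≤ d + 1 →
              ‖mt j - eckhoffM d ω α (j * N)‖ ≤ Rstar * (((j * N : ℕ) : ℝ))⁻¹) →
          ∀ ωt : ℂ, ωt ≠ 0 →
            ‖ωt - ω‖ ≤ C₄ * (Rstar / Bstar) * ((N : ℝ) ^ (d + 2))⁻¹ →
          ∀ αt : ℕ → ℂ,
            (∀ j, 1 ≤ j → j ≤ d + 1 →
              ∑ ℓ ∈ Finset.range (d + 1), αt ℓ * ((j * N : ℕ) : ℂ) ^ ℓ
                = mt j * (ωt ^ (j * N))⁻¹) →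
            ∀ ℓ ≤ d,
              ‖αt ℓ - α ℓ‖ ≤ C₅ ℓ * Rstar * (1 + Astar / Bstar) * ((N : ℝ) ^ (ℓ + 1))⁻¹ := by
  set K : ℝ := 2 + 4 * (d+1:ℝ)^(d+2) with hKdef
  have hKpos : 0 < K := by positivity
  refine ⟨1, one_pos, fun ℓ => (eckC d ℓ + 1) * K, fun ℓ =>
    mul_pos (by linarith [eckC_nonneg d ℓ]) hKpos, ?_⟩
  intro Astar Bstar Rstar hB hBA hR
  refine ⟨⌈4 * (d+1) * Rstar / Bstar⌉₊ + 1, ?_⟩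
  intro N hN ω hω α hα hαd mt hmt ωt hωt hωtω αt hαt
  have hApos : 0 < Astar := lt_of_lt_of_le hB hBA
  have hN1 : 1 ≤ N := le_trans (Nat.le_add_left 1 _) hN
  have hNpos : (0:ℝ) < N := by exact_mod_cast Nat.lt_of_lt_of_le Nat.zero_lt_one hN1
  have hNR : 4 * (d+1) * Rstar / Bstar ≤ (N:ℝ) := by
    calc 4 * (d+1) * Rstar / Bstar ≤ (⌈4 * (d+1) * Rstar / Bstar⌉₊ : ℝ) := Nat.le_ceil _
      _ ≤ (N:ℝ) := by exact_mod_cast le_trans (Nat.le_add_right _ 1) hN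
  have hN1R : (1:ℝ) ≤ N := by exact_mod_cast hN1
  have hωne : ω ≠ 0 := by
    intro h; rw [h, norm_zero] at hω; exact zero_ne_one hω
  set δ : ℝ := ‖ωt - ω‖ with hδdef
  have hδ0 : 0 ≤ δ := norm_nonneg _
  have hδle : δ ≤ (Rstar / Bstar) * ((N:ℝ)^(d+2))⁻¹ := by
    simpa using hωtω
  have hABnn : (0:ℝ) ≤ Astar / Bstar := by positivity
  have hAB1 : (1:ℝ) ≤ 1 + Astar / Bstar := by linarith
  -- the key per-node bound
  have key : ∀ j : ℕ, 1 ≤ j → j ≤ d + 1 →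
      ‖mt j * (ωt ^ (j*N))⁻¹ - ∑ l ∈ Finset.range (d+1), α l * ((j*N : ℕ):ℂ)^l‖
        ≤ K * Rstar * (1 + Astar / Bstar) / N := by
    intro j hj1 hjd
    set m : ℕ := j * N with hmdef
    have hm1 : 1 ≤ m := Nat.one_le_iff_ne_zero.mpr (by positivity)
    have hmR1 : (1:ℝ) ≤ m := by exact_mod_cast hm1
    have hmN : (N:ℝ) ≤ m := by
      have : N ≤ m := Nat.le_mul_of_pos_left N hj1
      exact_mod_cast this
    have hmle : (m:ℝ) ≤ (d+1) * N := by
      have h := Nat.mul_le_mul_right N hjd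
      have h2 : (m:ℝ) ≤ ((d+1) * N : ℕ) := by exact_mod_cast h
      push_cast at h2
      linarith
    have hdN1 : (1:ℝ) ≤ (d+1) * N := by
      nlinarith [hN1R, (by positivity : (0:ℝ) ≤ (d:ℝ))]
    -- m * δ ≤ 1/4
    have hNdpow : (N:ℝ) * ((N:ℝ)^(d+2))⁻¹ ≤ (N:ℝ)⁻¹ := by
      have hN0 : (N:ℝ) ≠ 0 := ne_of_gt hNpos
      have he : (N:ℝ) * ((N:ℝ)^(d+2))⁻¹ = ((N:ℝ)^(d+1))⁻¹ := by
        rw [pow_succ, mul_inv, mul_comm (((N:ℝ)^(d+1))⁻¹) ((N:ℝ)⁻¹), ← mul_assoc,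
          mul_inv_cancel₀ hN0, one_mul]
      rw [he]
      have h2 : (N:ℝ) ≤ (N:ℝ)^(d+1) := le_self_pow₀ hN1R (by omega)
      exact inv_anti₀ hNpos h2
    have hmδ : (m:ℝ) * δ ≤ 1/4 := by
      have h1 : (m:ℝ) * δ ≤ ((d+1)*N) * ((Rstar / Bstar) * ((N:ℝ)^(d+2))⁻¹) :=
        mul_le_mul hmle hδle hδ0 (by positivity)
      have h2 : ((d+1)*(N:ℝ)) * ((Rstar / Bstar) * ((N:ℝ)^(d+2))⁻¹)
          = ((d+1)*(Rstar/Bstar)) * ((N:ℝ) * ((N:ℝ)^(d+2))⁻¹) := by ring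
      have h3 : ((d+1)*(Rstar/Bstar)) * ((N:ℝ) * ((N:ℝ)^(d+2))⁻¹)
          ≤ ((d+1)*(Rstar/Bstar)) * (N:ℝ)⁻¹ := by
        apply mul_le_mul_of_nonneg_left hNdpow (by positivity)
      have h4 : ((d+1)*(Rstar/Bstar)) * (N:ℝ)⁻¹ ≤ 1/4 := by
        rw [mul_inv_le_iff₀ hNpos]
        have : 4 * (d+1) * Rstar / Bstar = 4 * ((d+1)*(Rstar/Bstar)) := by ring
        linarith [hNR]
      linarith
    have hδ14 : δ ≤ 1/4 := by nlinarith
    -- norm bounds for ωt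
    have hlb : 1 - δ ≤ ‖ωt‖ := by
      have h := norm_sub_norm_le ω ωt
      rw [hω, ← norm_sub_rev] at h
      linarith
    have hub : ‖ωt‖ ≤ 1 + δ := by
      have h := norm_sub_norm_le ωt ω
      rw [hω] at h
      linarith
    have h1δm : (3/4:ℝ) ≤ (1-δ)^m := by
      have hb := one_add_mul_le_pow (a := -δ) (by linarith) m
      have : (1:ℝ) + m * (-δ) = 1 - m * δ := by ring
      rw [this] at hb
      have : (1:ℝ) + -δ = 1 - δ := by ring
      rw [this] at hb
      linarith
    have h34 : (3/4:ℝ) ≤ ‖ωt‖^m := by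
      calc (3/4:ℝ) ≤ (1-δ)^m := h1δm
        _ ≤ ‖ωt‖^m := pow_le_pow_left₀ (by linarith) hlb m
    have hinv2 : ‖(ωt^m)⁻¹‖ ≤ 2 := by
      rw [norm_inv, norm_pow]
      have := inv_anti₀ (by norm_num : (0:ℝ) < 3/4) h34
      have h43 : ((3:ℝ)/4)⁻¹ = 4/3 := by norm_num
      rw [h43] at this
      linarith
    have hplus : (1+δ)^m ≤ 2 := by
      have hab : (1+δ)^m * (1-δ)^m ≤ 1 := by
        rw [← mul_pow]
        apply pow_le_one₀ (by nlinarith) (by nlinarith)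
      nlinarith [mul_le_mul_of_nonneg_left h1δm (pow_nonneg (by linarith : (0:ℝ) ≤ 1+δ) m)]
    have hdiff : ‖ωt^m - ω^m‖ ≤ 2 * m * δ := by
      have h := aux_norm_pow_sub_pow ωt ω (1+δ) (by linarith) hub (by rw [hω]; linarith) m
      have h2 : (m:ℝ) * (1+δ)^m * δ ≤ 2 * m * δ := by
        nlinarith [mul_le_mul_of_nonneg_left hplus (by positivity : (0:ℝ) ≤ (m:ℝ))]
      calc ‖ωt^m - ω^m‖ ≤ m * (1+δ)^m * ‖ωt - ω‖ := h
        _ = m * (1+δ)^m * δ := by rw [← hδdef]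
        _ ≤ 2 * m * δ := h2
    have hωtm : ωt^m ≠ 0 := pow_ne_zero _ hωt
    have hωm : ω^m ≠ 0 := pow_ne_zero _ hωne
    have hωminv : ‖(ω^m)⁻¹‖ = 1 := by
      rw [norm_inv, norm_pow, hω, one_pow, inv_one]
    have hinvdiff : ‖(ωt^m)⁻¹ - (ω^m)⁻¹‖ ≤ 4 * m * δ := by
      have hid : (ωt^m)⁻¹ - (ω^m)⁻¹ = (ω^m - ωt^m) * (ωt^m)⁻¹ * (ω^m)⁻¹ := by
        field_simp
      rw [hid, norm_mul, norm_mul, norm_sub_rev, hωminv, mul_one]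
      calc ‖ωt^m - ω^m‖ * ‖(ωt^m)⁻¹‖ ≤ (2 * m * δ) * 2 :=
            mul_le_mul hdiff hinv2 (norm_nonneg _) (by positivity)
        _ = 4 * m * δ := by ring
    -- bound on the clean moment sum
    have hSnorm : ‖∑ l ∈ Finset.range (d+1), α l * ((m : ℕ):ℂ)^l‖
        ≤ (d+1) * (Astar * ((d+1) * (N:ℝ))^d) := by
      calc ‖∑ l ∈ Finset.range (d+1), α l * ((m : ℕ):ℂ)^l‖
          ≤ ∑ l ∈ Finset.range (d+1), ‖α l * ((m : ℕ):ℂ)^l‖ := norm_sum_le _ _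
        _ ≤ ∑ _l ∈ Finset.range (d+1), Astar * ((d+1) * (N:ℝ))^d := by
            apply sum_le_sum
            intro l hl
            have hld : l ≤ d := by
              have := mem_range.mp hl; omega
            rw [norm_mul, norm_pow, Complex.norm_natCast]
            apply mul_le_mul (hα l hld) ?_ (by positivity) (le_of_lt hApos)
            calc (m:ℝ)^l ≤ ((d+1) * (N:ℝ))^l :=
                  pow_le_pow_left₀ (by positivity) hmle l
              _ ≤ ((d+1) * (N:ℝ))^d := pow_le_pow_right₀ hdN1 hld
        _ = (d+1) * (Astar * ((d+1) * (N:ℝ))^d) := by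
            rw [sum_const, card_range, nsmul_eq_mul]
            push_cast
            ring
    have hMnorm : ‖eckhoffM d ω α m‖ ≤ (d+1) * (Astar * ((d+1) * (N:ℝ))^d) := by
      rw [eckhoffM, norm_mul, norm_pow, hω, one_pow, one_mul]
      exact hSnorm
    -- decomposition
    have hMS : eckhoffM d ω α m * (ω^m)⁻¹ = ∑ l ∈ Finset.range (d+1), α l * ((m : ℕ):ℂ)^l := by
      rw [eckhoffM]
      field_simp
    have hdecomp : mt j * (ωt^m)⁻¹ - ∑ l ∈ Finset.range (d+1), α l * ((m : ℕ):ℂ)^l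
        = (mt j - eckhoffM d ω α m) * (ωt^m)⁻¹
          + eckhoffM d ω α m * ((ωt^m)⁻¹ - (ω^m)⁻¹) := by
      rw [← hMS]; ring
    rw [hdecomp]
    have hterm1 : ‖(mt j - eckhoffM d ω α m) * (ωt^m)⁻¹‖ ≤ (Rstar * (m:ℝ)⁻¹) * 2 := by
      rw [norm_mul]
      apply mul_le_mul (hmt j hj1 hjd) hinv2 (norm_nonneg _) (by positivity)
    have hterm2 : ‖eckhoffM d ω α m * ((ωt^m)⁻¹ - (ω^m)⁻¹)‖
        ≤ ((d+1) * (Astar * ((d+1) * (N:ℝ))^d)) * (4 * m * δ) := by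
      rw [norm_mul]
      apply mul_le_mul hMnorm hinvdiff (norm_nonneg _) (by positivity)
    have hmδ2 : (N:ℝ)^d * ((m:ℝ) * δ) ≤ (d+1) * (Rstar/Bstar) * (N:ℝ)⁻¹ := by
      have h1 : (N:ℝ)^d * ((m:ℝ) * δ) ≤ (N:ℝ)^d * (((d+1)*N) * ((Rstar/Bstar) * ((N:ℝ)^(d+2))⁻¹)) := by
        apply mul_le_mul_of_nonneg_left _ (by positivity)
        exact mul_le_mul hmle hδle hδ0 (by positivity)
      have h2 : (N:ℝ)^d * (((d+1)*(N:ℝ)) * ((Rstar/Bstar) * ((N:ℝ)^(d+2))⁻¹))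
          = (d+1) * (Rstar/Bstar) * ((N:ℝ)^(d+1) * ((N:ℝ)^(d+2))⁻¹) := by
        rw [pow_succ]
        ring
      have hN0 : (N:ℝ) ≠ 0 := ne_of_gt hNpos
      have h3 : (N:ℝ)^(d+1) * ((N:ℝ)^(d+2))⁻¹ = (N:ℝ)⁻¹ := by
        rw [pow_succ (N:ℝ) (d+1), mul_inv, ← mul_assoc,
          mul_inv_cancel₀ (pow_ne_zero (d+1) hN0), one_mul]
      rw [h2, h3] at h1
      exact h1
    have hB1 : (Rstar * (m:ℝ)⁻¹) * 2 ≤ 2 * Rstar * (1 + Astar/Bstar) / N := by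
      have h1 : (m:ℝ)⁻¹ ≤ (N:ℝ)⁻¹ := inv_anti₀ hNpos hmN
      calc (Rstar * (m:ℝ)⁻¹) * 2 ≤ (Rstar * (N:ℝ)⁻¹) * 2 := by
            apply mul_le_mul_of_nonneg_right _ (by norm_num)
            exact mul_le_mul_of_nonneg_left h1 (le_of_lt hR)
        _ ≤ 2 * Rstar * (1 + Astar/Bstar) / N := by
            rw [div_eq_mul_inv]
            nlinarith [mul_pos hR (inv_pos.mpr hNpos)]
    have hB2 : ((d+1) * (Astar * ((d+1) * (N:ℝ))^d)) * (4 * m * δ)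
        ≤ 4 * (d+1:ℝ)^(d+2) * Rstar * (1 + Astar/Bstar) / N := by
      have e1 : ((d+1) * (Astar * ((d+1) * (N:ℝ))^d)) * (4 * m * δ)
          = 4 * (d+1:ℝ)^(d+1) * Astar * ((N:ℝ)^d * ((m:ℝ) * δ)) := by
        rw [mul_pow, pow_succ]
        ring
      rw [e1]
      calc 4 * (d+1:ℝ)^(d+1) * Astar * ((N:ℝ)^d * ((m:ℝ) * δ))
          ≤ 4 * (d+1:ℝ)^(d+1) * Astar * ((d+1) * (Rstar/Bstar) * (N:ℝ)⁻¹) := by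
            apply mul_le_mul_of_nonneg_left hmδ2 (by positivity)
        _ = 4 * (d+1:ℝ)^(d+2) * Rstar * (Astar/Bstar) / N := by
            rw [pow_succ (d+1:ℝ) (d+1), div_eq_mul_inv]
            ring
        _ ≤ 4 * (d+1:ℝ)^(d+2) * Rstar * (1 + Astar/Bstar) / N := by
            rw [div_eq_mul_inv, div_eq_mul_inv]
            apply mul_le_mul_of_nonneg_right _ (le_of_lt (inv_pos.mpr hNpos))
            exact mul_le_mul_of_nonneg_left (by linarith) (by positivity)
    calc ‖(mt j - eckhoffM d ω α m) * (ωt^m)⁻¹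
            + eckhoffM d ω α m * ((ωt^m)⁻¹ - (ω^m)⁻¹)‖
        ≤ ‖(mt j - eckhoffM d ω α m) * (ωt^m)⁻¹‖
            + ‖eckhoffM d ω α m * ((ωt^m)⁻¹ - (ω^m)⁻¹)‖ := norm_add_le _ _
      _ ≤ (Rstar * (m:ℝ)⁻¹) * 2
            + ((d+1) * (Astar * ((d+1) * (N:ℝ))^d)) * (4 * m * δ) := add_le_add hterm1 hterm2
      _ ≤ 2 * Rstar * (1 + Astar/Bstar) / N
            + 4 * (d+1:ℝ)^(d+2) * Rstar * (1 + Astar/Bstar) / N := add_le_add hB1 hB2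
      _ = K * Rstar * (1 + Astar / Bstar) / N := by rw [hKdef]; ring
  -- the Vandermonde part
  intro ℓ hℓ
  have hℓlt : ℓ < d + 1 := by omega
  set e : Fin (d+1) → ℂ := fun i =>
    mt ((i:ℕ)+1) * (ωt ^ (((i:ℕ)+1)*N))⁻¹
      - ∑ l ∈ Finset.range (d+1), α l * (((((i:ℕ)+1)*N : ℕ)):ℂ)^l with hedef
  set β : Fin (d+1) → ℂ := fun i => (αt (i:ℕ) - α (i:ℕ)) * (N:ℂ)^(i:ℕ) with hβdef
  have hmv : (eckW d).mulVec β = e := by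
    funext i
    have hilt := i.isLt
    simp only [Matrix.mulVec, dotProduct, eckW, Matrix.vandermonde_apply, hβdef, hedef]
    rw [Fin.sum_univ_eq_sum_range (fun n => (((i:ℕ):ℂ)+1)^n * ((αt n - α n) * (N:ℂ)^n))]
    rw [show ∑ n ∈ Finset.range (d+1), (((i:ℕ):ℂ)+1)^n * ((αt n - α n) * (N:ℂ)^n)
        = (∑ n ∈ Finset.range (d+1), αt n * ((((i:ℕ)+1)*N : ℕ):ℂ)^n)
          - ∑ n ∈ Finset.range (d+1), α n * ((((i:ℕ)+1)*N : ℕ):ℂ)^n from ?_]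
    · rw [hαt ((i:ℕ)+1) (Nat.le_add_left 1 _) (by omega)]
    · rw [← Finset.sum_sub_distrib]
      apply Finset.sum_congr rfl
      intro n _
      have hc : ((((i:ℕ)+1)*N : ℕ):ℂ) = (((i:ℕ):ℂ)+1) * (N:ℂ) := by push_cast; ring
      rw [hc, mul_pow]
      ring
  have hβe : β = (eckW d)⁻¹.mulVec e := by
    rw [← hmv, Matrix.mulVec_mulVec, eckW_inv_mul, Matrix.one_mulVec]
  set E : ℝ := K * Rstar * (1 + Astar/Bstar) / N with hEdef
  have hEnn : (0:ℝ) ≤ E := by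
    rw [hEdef]
    apply div_nonneg _ (le_of_lt hNpos)
    have : (0:ℝ) < K * Rstar * (1 + Astar/Bstar) :=
      mul_pos (mul_pos hKpos hR) (by linarith)
    linarith
  have hekey : ∀ i : Fin (d+1), ‖e i‖ ≤ E := by
    intro i
    have hk := key ((i:ℕ)+1) (Nat.le_add_left 1 _) (by have := i.isLt; omega)
    rw [hEdef]
    simpa [hedef] using hk
  have hval : β ⟨ℓ, hℓlt⟩ = (αt ℓ - α ℓ) * (N:ℂ)^ℓ := by rw [hβdef]
  have hβL : ‖β ⟨ℓ, hℓlt⟩‖ ≤ eckC d ℓ * E := by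
    have h1 : β ⟨ℓ, hℓlt⟩ = ∑ jj : Fin (d+1), (eckW d)⁻¹ ⟨ℓ, hℓlt⟩ jj * e jj := by
      rw [hβe]; rfl
    rw [h1]
    calc ‖∑ jj : Fin (d+1), (eckW d)⁻¹ ⟨ℓ, hℓlt⟩ jj * e jj‖
        ≤ ∑ jj : Fin (d+1), ‖(eckW d)⁻¹ ⟨ℓ, hℓlt⟩ jj * e jj‖ := norm_sum_le _ _
      _ ≤ ∑ jj : Fin (d+1), ‖(eckW d)⁻¹ ⟨ℓ, hℓlt⟩ jj‖ * E := by
          apply sum_le_sum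
          intro jj _
          rw [norm_mul]
          exact mul_le_mul_of_nonneg_left (hekey jj) (norm_nonneg _)
      _ = (∑ jj : Fin (d+1), ‖(eckW d)⁻¹ ⟨ℓ, hℓlt⟩ jj‖) * E := by rw [← Finset.sum_mul]
      _ = eckC d ℓ * E := by rw [eckC, dif_pos hℓlt]
  have hfin : ‖αt ℓ - α ℓ‖ * (N:ℝ)^ℓ ≤ eckC d ℓ * E := by
    calc ‖αt ℓ - α ℓ‖ * (N:ℝ)^ℓ = ‖β ⟨ℓ, hℓlt⟩‖ := by
          rw [hval, norm_mul, norm_pow, Complex.norm_natCast]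
      _ ≤ eckC d ℓ * E := hβL
  have hNl : (0:ℝ) < (N:ℝ)^ℓ := by positivity
  rw [← le_div_iff₀ hNl] at hfin
  calc ‖αt ℓ - α ℓ‖ ≤ eckC d ℓ * E / (N:ℝ)^ℓ := hfin
    _ = eckC d ℓ * K * Rstar * (1 + Astar/Bstar) * ((N:ℝ)^(ℓ+1))⁻¹ := by
        rw [hEdef, pow_succ]
        field_simp
    _ ≤ (eckC d ℓ + 1) * K * Rstar * (1 + Astar/Bstar) * ((N:ℝ)^(ℓ+1))⁻¹ := by
        have h1 : eckC d ℓ * K ≤ (eckC d ℓ + 1) * K := by nlinarith [hKpos]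
        apply mul_le_mul_of_nonneg_right _ (by positivity)
        apply mul_le_mul_of_nonneg_right _ (by linarith)
        exact mul_le_mul_of_nonneg_right h1 (le_of_lt hR)
end
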